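/- arXiv:1501.01274 — 4 statements merged into one kernel-verified Lean document; each statement's English description precedes it below -/
import Mathlib

section
/- Let 0 < n < d be integers and c₁ > 0. There is a constant C = C(n,d,c₁) < ∞ with the following property. Let μ be a Borel measure on ℝ^d with closed support E, let x₀ ∈ E, r > 0, let L ⊂ ℝ^d be an n-dimensional affine subspace, let c ≥ c₁ be a constant, and suppose that d_{B(x₀,2r)}(μ, c ℋⁿ|_L) ≤ ε r^{n+1} for some ε ∈ (0,1]. Then every y ∈ L ∩ B(x₀, r) satisfies dist(y, E) ≤ C ε^{1/(n+1)} r. -/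
open MeasureTheory Metric Set
open scoped ENNReal NNReal

noncomputable section

abbrev Euc (d : ℕ) := EuclideanSpace ℝ (Fin d)

/-- The closed support of a Borel measure on `ℝ^d`. -/
def msupport {d : ℕ} (μ : Measure (Euc d)) : Set (Euc d) :=
  {x | ∀ r > 0, 0 < μ (Metric.ball x r)}

/-- `L` is an `n`-dimensional affine subspace (an `n`-plane) of `ℝ^d`. -/
def IsNPlane {d : ℕ} (n : ℕ) (L : Set (Euc d)) : Prop :=
  ∃ W : AffineSubspace ℝ (Euc d), (W : Set (Euc d)) = L ∧ Module.finrank ℝ W.direction = n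

/-- `μ` is `n`-Ahlfors–David regular with constant `A` and (unbounded) support `E`. -/
def IsADRWith {d : ℕ} (n : ℕ) (A : ℝ) (μ : Measure (Euc d)) (E : Set (Euc d)) : Prop :=
  1 ≤ A ∧ msupport μ = E ∧ ¬ Bornology.IsBounded E ∧
    ∀ x ∈ E, ∀ r : ℝ, 0 < r →
      ENNReal.ofReal (A⁻¹ * r ^ n) ≤ μ (closedBall x r) ∧
      μ (closedBall x r) ≤ ENNReal.ofReal (A * r ^ n)

/-- `μ` is `n`-uniformly rectifiable: `n`-ADR plus big pieces of Lipschitz images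
(with BPLI constants `θ`, `M`). -/
def IsURWith {d : ℕ} (n : ℕ) (A θ M : ℝ) (μ : Measure (Euc d)) (E : Set (Euc d)) : Prop :=
  IsADRWith n A μ E ∧ 0 < θ ∧ 0 < M ∧
    ∀ x ∈ E, ∀ r : ℝ, 0 < r →
      ∃ g : EuclideanSpace ℝ (Fin n) → Euc d, LipschitzWith (Real.toNNReal M) g ∧
        ENNReal.ofReal (θ * r ^ n) ≤ μ (closedBall x r ∩ g '' (closedBall 0 r))

/-- `S` belongs to the kernel class `K_{n+β}(ℝ^d)` with constant `A`:
size bound `|S(x,y)| ≤ A|x-y|^{-(n+β)}` and Lipschitz-in-`y` bound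
`|S(x,y) - S(x,y')| ≤ A|y-y'| |x-y|^{-(n+β+1)}` for `|y-y'| ≤ |x-y|/2`. -/
def IsCZKernel {d : ℕ} (n : ℕ) (β A : ℝ) (S : Euc d → Euc d → ℝ) : Prop :=
  (∀ x y : Euc d, x ≠ y → |S x y| ≤ A / dist x y ^ ((n : ℝ) + β)) ∧
  (∀ x y y' : Euc d, x ≠ y → dist y y' ≤ dist x y / 2 →
    |S x y - S x y'| ≤ A * dist y y' / dist x y ^ ((n : ℝ) + β + 1))

lemma msupport_compl_null {d : ℕ} (μ : Measure (Euc d)) : μ (msupport μ)ᶜ = 0 := by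
  apply measure_null_of_locally_null
  intro x hx
  simp only [msupport, mem_compl_iff, mem_setOf_eq, not_forall] at hx
  push_neg at hx
  obtain ⟨r, hr, hμr⟩ := hx
  exact ⟨Metric.ball x r, mem_nhdsWithin_of_mem_nhds (Metric.ball_mem_nhds x hr),
    by simpa using hμr⟩


lemma plane_ball_bounds {n d : ℕ} (hn : 0 < n) (W : AffineSubspace ℝ (Euc d))
    (hW : Module.finrank ℝ W.direction = n) {y : Euc d} (hy : y ∈ W) {s : ℝ} (hs : 0 ≤ s) :
    ENNReal.ofReal ((2 * (s / Real.sqrt n)) ^ n)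
        ≤ μH[(n : ℝ)] ((W : Set (Euc d)) ∩ closedBall y s) ∧
      μH[(n : ℝ)] ((W : Set (Euc d)) ∩ closedBall y s) < ⊤ := by
  have hn' : (0:ℝ) < n := by exact_mod_cast hn
  have hsqrt : 0 < Real.sqrt n := Real.sqrt_pos.2 hn'
  set En := EuclideanSpace ℝ (Fin n) with hEn
  let e : W.direction ≃ₗᵢ[ℝ] En := ((stdOrthonormalBasis ℝ W.direction).reindex (finCongr hW)).repr
  set ψ : En → Euc d := fun v => (e.symm v : Euc d) + y with hψdef
  have hψ : Isometry ψ := by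
    apply Isometry.of_dist_eq
    intro u v
    have h1 : dist (ψ u) (ψ v) = ‖((e.symm u - e.symm v : W.direction) : Euc d)‖ := by
      simp [hψdef, dist_eq_norm]
    rw [h1]
    have h2 : ‖((e.symm u - e.symm v : W.direction) : Euc d)‖ = ‖e.symm u - e.symm v‖ := rfl
    rw [h2, ← dist_eq_norm, e.symm.dist_map]
  have himg : ψ '' closedBall 0 s = (W : Set (Euc d)) ∩ closedBall y s := by
    ext x
    constructor
    · rintro ⟨v, hv, rfl⟩
      rw [mem_closedBall, dist_zero_right] at hv
      refine ⟨?_, ?_⟩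
      · have := AffineSubspace.vadd_mem_of_mem_direction (e.symm v).2 hy
        simpa [vadd_eq_add] using this
      · rw [mem_closedBall]
        have : dist (ψ v) y = ‖(e.symm v : Euc d)‖ := by
          simp [hψdef, dist_eq_norm]
        rw [this]
        have : ‖(e.symm v : Euc d)‖ = ‖e.symm v‖ := rfl
        rw [this, ← dist_zero_right, ← map_zero e.symm, e.symm.dist_map, dist_zero_right]
        exact hv
    · rintro ⟨hxW, hxB⟩
      have hd : x - y ∈ W.direction := by
        simpa [vsub_eq_sub] using AffineSubspace.vsub_mem_direction hxW hy
      refine ⟨e ⟨x - y, hd⟩, ?_, ?_⟩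
      · rw [mem_closedBall, dist_zero_right, ← dist_zero_right, ← map_zero e, e.dist_map]
        rw [dist_zero_right]
        have : ‖(⟨x - y, hd⟩ : W.direction)‖ = ‖x - y‖ := rfl
        rw [this, ← dist_eq_norm]
        exact mem_closedBall.mp hxB
      · simp [hψdef]
  have hmeas : μH[(n : ℝ)] ((W : Set (Euc d)) ∩ closedBall y s)
      = μH[(n : ℝ)] (closedBall (0 : En) s) := by
    rw [← himg, hψ.hausdorffMeasure_image (Or.inl (by positivity))]
  have hpi : (μH[(n : ℝ)] : Measure (Fin n → ℝ)) = volume := by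
    simpa using (hausdorffMeasure_pi_real (ι := Fin n))
  rw [hmeas]
  constructor
  · -- lower bound
    set a := s / Real.sqrt n with ha
    have ha0 : 0 ≤ a := div_nonneg hs hsqrt.le
    have hg : LipschitzWith 1 (⇑(WithLp.equiv 2 (Fin n → ℝ))) := PiLp.lipschitzWith_ofLp 2 _
    have hsub : closedBall (0 : Fin n → ℝ) a
        ⊆ (⇑(WithLp.equiv 2 (Fin n → ℝ))) '' closedBall (0 : En) s := by
      intro p hp
      rw [mem_closedBall, dist_zero_right] at hp
      refine ⟨(WithLp.equiv 2 (Fin n → ℝ)).symm p, ?_, (WithLp.equiv 2 _).apply_symm_apply p⟩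
      rw [mem_closedBall, dist_zero_right]
      have hterm : ∀ i : Fin n, ‖((WithLp.equiv 2 (Fin n → ℝ)).symm p) i‖ ^ 2 ≤ a ^ 2 := by
        intro i
        rw [WithLp.equiv_symm_apply, PiLp.toLp_apply]
        have h1 : ‖p i‖ ≤ a := le_trans (norm_le_pi_norm p i) hp
        exact pow_le_pow_left₀ (norm_nonneg _) h1 2
      calc ‖(WithLp.equiv 2 (Fin n → ℝ)).symm p‖
          = Real.sqrt (∑ i, ‖((WithLp.equiv 2 (Fin n → ℝ)).symm p) i‖ ^ 2) :=
            EuclideanSpace.norm_eq _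
        _ ≤ Real.sqrt (∑ _i : Fin n, a ^ 2) :=
            Real.sqrt_le_sqrt (Finset.sum_le_sum fun i _ => hterm i)
        _ = Real.sqrt ((n : ℝ) * a ^ 2) := by
            rw [Finset.sum_const, Finset.card_univ, Fintype.card_fin, nsmul_eq_mul]
        _ = Real.sqrt n * a := by
            rw [Real.sqrt_mul (le_of_lt hn'), Real.sqrt_sq ha0]
        _ = s := by rw [ha]; field_simp [hsqrt.ne']
    have h1 : μH[(n : ℝ)] ((⇑(WithLp.equiv 2 (Fin n → ℝ))) '' closedBall (0 : En) s)
        ≤ μH[(n : ℝ)] (closedBall (0 : En) s) := by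
      have := hg.hausdorffMeasure_image_le (by positivity : (0:ℝ) ≤ n) (closedBall (0 : En) s)
      simpa using this
    calc ENNReal.ofReal ((2 * a) ^ n)
        = volume (closedBall (0 : Fin n → ℝ) a) := by
          rw [Real.volume_pi_closedBall _ ha0, Fintype.card_fin]
      _ = μH[(n : ℝ)] (closedBall (0 : Fin n → ℝ) a) := by rw [hpi]
      _ ≤ μH[(n : ℝ)] ((⇑(WithLp.equiv 2 (Fin n → ℝ))) '' closedBall (0 : En) s) :=
          measure_mono hsub
      _ ≤ _ := h1
  · -- finiteness
    set φ : (Fin n → ℝ) → En := ⇑(WithLp.equiv 2 (Fin n → ℝ)).symm with hφ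
    have hφlip : LipschitzWith (Real.toNNReal (Real.sqrt n)) φ := by
      apply LipschitzWith.of_dist_le_mul
      intro p q
      rw [Real.coe_toNNReal _ hsqrt.le]
      have h1 : dist (φ p) (φ q) = Real.sqrt (∑ i, dist (φ p i) (φ q i) ^ 2) :=
        EuclideanSpace.dist_eq _ _
      rw [h1]
      have hterm : ∀ i : Fin n, dist (φ p i) (φ q i) ^ 2 ≤ dist p q ^ 2 := by
        intro i
        have : dist (φ p i) (φ q i) = dist (p i) (q i) := by
          simp [hφ, WithLp.equiv_symm_apply, PiLp.toLp_apply]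
        rw [this]
        exact pow_le_pow_left₀ dist_nonneg (dist_le_pi_dist p q i) 2
      calc Real.sqrt (∑ i, dist (φ p i) (φ q i) ^ 2)
          ≤ Real.sqrt (∑ _i : Fin n, dist p q ^ 2) :=
            Real.sqrt_le_sqrt (Finset.sum_le_sum fun i _ => hterm i)
        _ = Real.sqrt ((n : ℝ) * dist p q ^ 2) := by
            rw [Finset.sum_const, Finset.card_univ, Fintype.card_fin, nsmul_eq_mul]
        _ = Real.sqrt n * dist p q := by
            rw [Real.sqrt_mul (le_of_lt hn'), Real.sqrt_sq dist_nonneg]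
    have hsub : closedBall (0 : En) s ⊆ φ '' closedBall (0 : Fin n → ℝ) s := by
      intro v hv
      rw [mem_closedBall, dist_zero_right] at hv
      refine ⟨WithLp.equiv 2 (Fin n → ℝ) v, ?_, (WithLp.equiv 2 _).symm_apply_apply v⟩
      rw [mem_closedBall, dist_zero_right]
      rw [pi_norm_le_iff_of_nonneg hs]
      intro i
      rw [WithLp.equiv_apply]
      refine le_trans ?_ hv
      rw [EuclideanSpace.norm_eq]
      have : ‖v i‖ = Real.sqrt (‖v i‖ ^ 2) := (Real.sqrt_sq (norm_nonneg _)).symm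
      rw [this]
      apply Real.sqrt_le_sqrt
      exact Finset.single_le_sum (f := fun j => ‖v j‖ ^ 2) (fun j _ => by positivity)
        (Finset.mem_univ i)
    calc μH[(n : ℝ)] (closedBall (0 : En) s)
        ≤ μH[(n : ℝ)] (φ '' closedBall (0 : Fin n → ℝ) s) := measure_mono hsub
      _ ≤ (Real.toNNReal (Real.sqrt n) : ℝ≥0∞) ^ (n : ℝ)
            * μH[(n : ℝ)] (closedBall (0 : Fin n → ℝ) s) :=
          hφlip.hausdorffMeasure_image_le (by positivity) _
      _ < ⊤ := by
          rw [hpi, Real.volume_pi_closedBall _ hs]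
          exact ENNReal.mul_lt_top
            (ENNReal.rpow_lt_top_of_nonneg (by positivity) ENNReal.coe_ne_top)
            ENNReal.ofReal_lt_top

/-- if `d_{B(x₀,2r)}(μ, c ℋⁿ|_L) ≤ ε r^{n+1}` with `c ≥ c₁ > 0`, then every
point of `L ∩ B(x₀,r)` is at distance at most `C ε^{1/(n+1)} r` from `supp μ`.
The condition `d_B(σ,ν) ≤ t` is spelled out as a bound over all `1`-Lipschitz functions
supported in `B`. -/
theorem statement6 (n d : ℕ) (hn : 0 < n) (hnd : n < d) (c₁ : ℝ) (hc₁ : 0 < c₁) :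
    ∃ C : ℝ, 0 < C ∧
      ∀ (μ : Measure (Euc d)) (x₀ : Euc d) (r : ℝ) (L : Set (Euc d)) (c ε : ℝ),
        x₀ ∈ msupport μ → 0 < r → IsNPlane n L → c₁ ≤ c → 0 < ε → ε ≤ 1 →
        (∀ f : Euc d → ℝ, LipschitzWith 1 f → tsupport f ⊆ closedBall x₀ (2 * r) →
          |(∫ y, f y ∂μ) - c * ∫ y in L, f y ∂(μH[(n : ℝ)])| ≤ ε * r ^ (n + 1)) →
        ∀ y ∈ L ∩ closedBall x₀ r,
          infDist y (msupport μ) ≤ C * ε ^ (1 / ((n : ℝ) + 1)) * r := by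
  classical
  have hn' : (0:ℝ) < n := by exact_mod_cast hn
  have hsqrt : 0 < Real.sqrt n := Real.sqrt_pos.2 hn'
  set K : ℝ := (2 * Real.sqrt n ^ n / c₁) ^ (1 / ((n : ℝ) + 1)) with hKdef
  have hK : 0 < K := Real.rpow_pos_of_pos (by positivity) _
  refine ⟨K + 1, by positivity, ?_⟩
  intro μ x₀ r L c ε hx₀ hr hL hc hε hε1 hdist y hy
  obtain ⟨W, hWL, hWd⟩ := hL
  obtain ⟨hyL, hyB⟩ := hy
  have hyW : y ∈ W := by rw [← hWL] at hyL; exact hyL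
  set t : ℝ := ε ^ (1 / ((n : ℝ) + 1)) with htdef
  have ht : 0 < t := Real.rpow_pos_of_pos hε _
  by_contra hcon
  push_neg at hcon
  set ρ : ℝ := (K + 1) * t * r with hρdef
  have hρpos : 0 < ρ := by positivity
  have hρE : ρ < infDist y (msupport μ) := hcon
  have hEy : infDist y (msupport μ) ≤ dist y x₀ := infDist_le_dist_of_mem hx₀
  have hyr : dist y x₀ ≤ r := mem_closedBall.mp hyB
  have hρr : ρ ≤ r := le_trans (le_of_lt hρE) (le_trans hEy hyr)
  -- the test function
  set f : Euc d → ℝ := fun x => max (ρ - dist x y) 0 with hfdef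
  have hflip : LipschitzWith 1 f := by
    have h1 : LipschitzWith 1 fun x : Euc d => ρ - dist x y := by
      simpa using (LipschitzWith.const (α := Euc d) ρ).sub (LipschitzWith.dist_left y)
    simpa [hfdef] using h1.max_const 0
  have hfnonneg : ∀ x, 0 ≤ f x := fun x => le_max_right _ _
  have hfle : ∀ x, f x ≤ ρ := by
    intro x
    apply max_le _ hρpos.le
    have := dist_nonneg (x := x) (y := y)
    linarith
  have hsuppf : Function.support f ⊆ ball y ρ := by
    intro x hx
    rw [Function.mem_support, hfdef] at hx
    simp only at hx
    rw [mem_ball]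
    by_contra h
    push_neg at h
    exact hx (max_eq_right (by linarith))
  have hts : tsupport f ⊆ closedBall x₀ (2 * r) := by
    refine (closure_mono hsuppf).trans (closure_ball_subset_closedBall.trans ?_)
    apply closedBall_subset_closedBall'
    calc ρ + dist y x₀ ≤ r + r := add_le_add hρr hyr
      _ = 2 * r := by ring
  have hsub : Function.support f ⊆ (msupport μ)ᶜ := by
    intro x hx
    have hxb := hsuppf hx
    rw [mem_ball] at hxb
    intro hxE
    have h3 : infDist y (msupport μ) ≤ dist y x := infDist_le_dist_of_mem hxE
    rw [dist_comm x y] at hxb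
    linarith
  have hfμ0 : ∫ x, f x ∂μ = 0 := by
    have hae : f =ᵐ[μ] 0 := by
      rw [Filter.EventuallyEq, ae_iff]
      apply measure_mono_null _ (msupport_compl_null μ)
      intro x hx
      simp only [mem_setOf_eq, Pi.zero_apply] at hx
      exact hsub (by simpa [Function.mem_support] using hx)
    rw [integral_congr_ae hae]
    simp
  -- plane bounds
  obtain ⟨hlow, hfin⟩ := plane_ball_bounds hn W hWd hyW (s := ρ/2) (by positivity)
  obtain ⟨-, hfinρ⟩ := plane_ball_bounds hn W hWd hyW (s := ρ) hρpos.le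
  have hLclosed : IsClosed L := by
    rw [← hWL]
    exact W.isClosed_direction_iff.mp W.direction.closed_of_finiteDimensional
  have hLmeas : MeasurableSet L := hLclosed.measurableSet
  have hfcont : Continuous f := hflip.continuous
  have hint : IntegrableOn f L μH[(n : ℝ)] := by
    rw [IntegrableOn, ← integrableOn_iff_integrable_of_support_subset
      (hsuppf.trans ball_subset_closedBall)]
    rw [IntegrableOn, Measure.restrict_restrict measurableSet_closedBall]
    apply Measure.integrableOn_of_bounded (M := ρ)
    · have heq : closedBall y ρ ∩ L = (W : Set (Euc d)) ∩ closedBall y ρ := by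
        rw [hWL, inter_comm]
      rw [heq]
      exact hfinρ.ne
    · exact hfcont.aestronglyMeasurable
    · filter_upwards with x
      rw [Real.norm_eq_abs, abs_of_nonneg (hfnonneg x)]
      exact hfle x
  set I := ∫ x in L, f x ∂μH[(n : ℝ)] with hI
  have hmW : L ∩ closedBall y (ρ/2) = (W : Set (Euc d)) ∩ closedBall y (ρ/2) := by rw [hWL]
  have hfge : ∀ x ∈ L ∩ closedBall y (ρ/2), ρ/2 ≤ f x := by
    intro x hx
    obtain ⟨-, hxB⟩ := hx
    rw [mem_closedBall] at hxB
    refine le_trans ?_ (le_max_left _ _)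
    linarith
  have h1 : ρ/2 * (μH[(n : ℝ)] (L ∩ closedBall y (ρ/2))).toReal ≤ ∫ x in L ∩ closedBall y (ρ/2), f x ∂μH[(n : ℝ)] := by
    apply setIntegral_ge_of_const_le_real (hLmeas.inter measurableSet_closedBall)
    · rw [hmW]; exact hfin.ne
    · exact hfge
    · exact hint.mono_set inter_subset_left
  have h2 : ∫ x in L ∩ closedBall y (ρ/2), f x ∂μH[(n : ℝ)] ≤ I := by
    apply setIntegral_mono_set hint
    · filter_upwards with x using hfnonneg x
    · exact HasSubset.Subset.eventuallyLE inter_subset_left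
  have hmlow : (2 * (ρ/2 / Real.sqrt n)) ^ n
      ≤ (μH[(n : ℝ)] (L ∩ closedBall y (ρ/2))).toReal := by
    have h3 : (ENNReal.ofReal ((2 * (ρ/2 / Real.sqrt n)) ^ n)).toReal
        ≤ (μH[(n : ℝ)] (L ∩ closedBall y (ρ/2))).toReal := by
      apply ENNReal.toReal_mono
      · rw [hmW]; exact hfin.ne
      · rw [hmW]; exact hlow
    rwa [ENNReal.toReal_ofReal (by positivity)] at h3
  have hQI : ρ/2 * (2 * (ρ/2 / Real.sqrt n)) ^ n ≤ I :=
    le_trans (mul_le_mul_of_nonneg_left hmlow (by positivity)) (le_trans h1 h2)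
  have hbound := hdist f hflip hts
  rw [hfμ0] at hbound
  have hc0 : 0 < c := lt_of_lt_of_le hc₁ hc
  have hQ0 : (0:ℝ) ≤ ρ/2 * (2 * (ρ/2 / Real.sqrt n)) ^ n := by positivity
  have hI0 : 0 ≤ I := le_trans hQ0 hQI
  have hcI : c * I ≤ ε * r ^ (n+1) := by
    have h4 := abs_le.mp hbound
    linarith [h4.1, h4.2]
  have hkey : c₁ * (ρ/2 * (2 * (ρ/2 / Real.sqrt n)) ^ n) ≤ ε * r ^ (n+1) :=
    le_trans (mul_le_mul hc hQI hQ0 hc0.le) hcI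
  have harith : ρ/2 * (2 * (ρ/2 / Real.sqrt n)) ^ n = ρ ^ (n+1) / (2 * Real.sqrt n ^ n) := by
    have h5 : 2 * (ρ/2 / Real.sqrt n) = ρ / Real.sqrt n := by ring
    rw [h5, div_pow, pow_succ]
    field_simp
  rw [harith] at hkey
  have hA : (0:ℝ) < 2 * Real.sqrt n ^ n := by positivity
  rw [mul_div_assoc', div_le_iff₀ hA] at hkey
  -- hkey : c₁ * ρ ^ (n+1) ≤ ε * r ^ (n+1) * (2 * Real.sqrt n ^ n)
  have hKpow : K ^ (n+1) = 2 * Real.sqrt n ^ n / c₁ := by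
    rw [hKdef, ← Real.rpow_natCast ((2 * Real.sqrt n ^ n / c₁) ^ (1 / ((n:ℝ)+1))) (n+1),
        ← Real.rpow_mul (by positivity)]
    push_cast
    rw [one_div, inv_mul_cancel₀ (by positivity : ((n:ℝ)+1) ≠ 0), Real.rpow_one]
  have htpow : t ^ (n+1) = ε := by
    rw [htdef, ← Real.rpow_natCast (ε ^ (1 / ((n:ℝ)+1))) (n+1),
        ← Real.rpow_mul hε.le]
    push_cast
    rw [one_div, inv_mul_cancel₀ (by positivity : ((n:ℝ)+1) ≠ 0), Real.rpow_one]
  have h6 : (K * t * r) ^ (n+1) = 2 * Real.sqrt n ^ n / c₁ * (ε * r ^ (n+1)) := by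
    rw [mul_pow, mul_pow, hKpow, htpow]
    ring
  have h7 : ρ ^ (n+1) ≤ (K * t * r) ^ (n+1) := by
    rw [h6, div_mul_eq_mul_div, le_div_iff₀ hc₁]
    calc ρ ^ (n+1) * c₁ = c₁ * ρ ^ (n+1) := by ring
      _ ≤ ε * r ^ (n+1) * (2 * Real.sqrt n ^ n) := hkey
      _ = 2 * Real.sqrt n ^ n * (ε * r ^ (n+1)) := by ring
  have h8 : ρ ≤ K * t * r :=
    le_of_pow_le_pow_left₀ (Nat.succ_ne_zero n) (by positivity) h7
  rw [hρdef] at h8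
  nlinarith [mul_pos ht hr]
end
end

section
/- Let 0 < n < d be integers and c₁, κ > 0. There is ε₀ = ε₀(n,d,c₁,κ) > 0 with the following property. Let μ be a Borel measure on ℝ^d with closed support E, let x₀ ∈ E, r > 0, let L ⊂ ℝ^d be an n-dimensional affine subspace, let c ≥ c₁, and suppose d_{B(x₀,4r)}(μ, c ℋⁿ|_L) ≤ ε (2r)^{n+1} with 0 ≤ ε ≤ ε₀. If x ∈ B(x₀, r) satisfies dist(x, E) ≥ κ r, then dist(x, L) ≥ κ r / 2; in particular B(x, κr/2) ∩ L = ∅. -/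
open MeasureTheory Metric Set
open scoped ENNReal NNReal

noncomputable section

lemma exists_plane_isometry {d n : ℕ} (W : AffineSubspace ℝ (Euc d))
    (hW2 : Module.finrank ℝ W.direction = n) {p : Euc d} (hpW : p ∈ W) :
    ∃ φ : EuclideanSpace ℝ (Fin n) → Euc d, Isometry φ ∧
      ∀ R : ℝ, φ '' Metric.closedBall 0 R = (W : Set (Euc d)) ∩ Metric.closedBall p R := by
  haveI : FiniteDimensional ℝ W.direction := inferInstance
  set e : W.direction ≃ₗᵢ[ℝ] EuclideanSpace ℝ (Fin n) :=
    ((stdOrthonormalBasis ℝ W.direction).reindex (finCongr hW2)).repr with he_def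
  set φ : EuclideanSpace ℝ (Fin n) → Euc d := fun v => (↑(e.symm v) : Euc d) + p
    with hφ_def
  have hφiso : Isometry φ := by
    apply Isometry.of_dist_eq
    intro u v
    have h2 : dist ((e.symm u : Euc d)) ((e.symm v : Euc d)) = dist (e.symm u) (e.symm v) := by
      rw [dist_eq_norm, dist_eq_norm, ← Submodule.coe_sub, ← Submodule.coe_norm]
    calc dist (φ u) (φ v)
        = dist ((e.symm u : Euc d)) ((e.symm v : Euc d)) := dist_add_right _ _ _
      _ = dist u v := by rw [h2, e.symm.dist_map]
  have hφ0 : φ 0 = p := by simp [hφ_def]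
  refine ⟨φ, hφiso, ?_⟩
  intro R
  ext y
  constructor
  · rintro ⟨v, hv, rfl⟩
    constructor
    · have := AffineSubspace.vadd_mem_of_mem_direction (e.symm v).2 hpW
      simpa [hφ_def, vadd_eq_add] using this
    · rw [Metric.mem_closedBall, ← hφ0, hφiso.dist_eq]
      simpa [Metric.mem_closedBall] using hv
  · rintro ⟨hyW, hyb⟩
    have hd : y - p ∈ W.direction := by
      have := AffineSubspace.vsub_mem_direction hyW hpW
      simpa [vsub_eq_sub] using this
    have hval : φ (e ⟨y - p, hd⟩) = y := by
      simp [hφ_def, LinearIsometryEquiv.symm_apply_apply]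
    refine ⟨e ⟨y - p, hd⟩, ?_, hval⟩
    rw [Metric.mem_closedBall, ← hφiso.dist_eq (e ⟨y - p, hd⟩) 0, hφ0, hval]
    exact hyb

/-- if `d_{B(x₀,4r)}(μ, c ℋⁿ|_L) ≤ ε (2r)^{n+1}` with `ε ≤ ε₀` small and
`c ≥ c₁ > 0`, then any `x ∈ B(x₀,r)` with `dist(x, supp μ) ≥ κ r` satisfies
`dist(x,L) ≥ κr/2`; in particular `B(x, κr/2) ∩ L = ∅`. -/
theorem statement7 (n d : ℕ) (hn : 0 < n) (hnd : n < d) (c₁ κ : ℝ)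
    (hc₁ : 0 < c₁) (hκ : 0 < κ) :
    ∃ ε₀ : ℝ, 0 < ε₀ ∧
      ∀ (μ : Measure (Euc d)) (x₀ : Euc d) (r : ℝ) (L : Set (Euc d)) (c ε : ℝ),
        x₀ ∈ msupport μ → 0 < r → IsNPlane n L → c₁ ≤ c → 0 ≤ ε → ε ≤ ε₀ →
        (∀ f : Euc d → ℝ, LipschitzWith 1 f → tsupport f ⊆ closedBall x₀ (4 * r) →
          |(∫ y, f y ∂μ) - c * ∫ y in L, f y ∂(μH[(n : ℝ)])| ≤ ε * (2 * r) ^ (n + 1)) →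
        ∀ x ∈ closedBall x₀ r, κ * r ≤ infDist x (msupport μ) →
          κ * r / 2 ≤ infDist x L ∧ ball x (κ * r / 2) ∩ L = ∅ := by
  -- Haar instance for Hausdorff measure on ℝⁿ
  haveI hHaar : (μH[(n:ℝ)] : Measure (EuclideanSpace ℝ (Fin n))).IsAddHaarMeasure := by
    have h := isAddHaarMeasure_hausdorffMeasure (E := EuclideanSpace ℝ (Fin n))
    rwa [finrank_euclideanSpace_fin] at h
  set cnE : ℝ≥0∞ := μH[(n:ℝ)] (ball (0 : EuclideanSpace ℝ (Fin n)) 1) with hcnE_def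
  have hcnE_pos : 0 < cnE := measure_ball_pos _ _ one_pos
  have hcnE_fin : cnE ≠ ⊤ := measure_ball_lt_top.ne
  set cn : ℝ := cnE.toReal with hcn_def
  have hcn_pos : 0 < cn := ENNReal.toReal_pos hcnE_pos.ne' hcnE_fin
  refine ⟨c₁ * (κ/8)^(n+1) * cn / 2^(n+2), by positivity, ?_⟩
  intro μ x₀ r L c ε hx₀ hr hL hc hε0 hεε₀ hcomp x hx hxfar
  have hc0 : 0 < c := lt_of_lt_of_le hc₁ hc
  -- κ * r ≤ r
  have hκr : κ * r ≤ r := by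
    have h1 : infDist x (msupport μ) ≤ dist x x₀ := infDist_le_dist_of_mem hx₀
    have h2 : dist x x₀ ≤ r := mem_closedBall.mp hx
    linarith
  obtain ⟨W, hW1, hW2⟩ := hL
  -- L is nonempty
  have hLne : L.Nonempty := by
    rw [← hW1]
    rw [AffineSubspace.nonempty_iff_ne_bot]
    intro hbot
    rw [hbot, AffineSubspace.direction_bot, finrank_bot] at hW2
    omega
  -- μ vanishes off its support
  have hμ0 : μ ((msupport μ)ᶜ) = 0 := by
    apply measure_null_of_locally_null
    intro y hy
    simp only [msupport, mem_compl_iff, mem_setOf_eq, not_forall] at hy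
    push_neg at hy
    obtain ⟨s, hs, hμs⟩ := hy
    exact ⟨ball y s, mem_nhdsWithin_of_mem_nhds (ball_mem_nhds y hs),
      le_antisymm hμs zero_le⟩
  -- main claim
  have key : κ * r / 2 ≤ infDist x L := by
    by_contra hcon
    push_neg at hcon
    obtain ⟨p, hp, hxp⟩ := (infDist_lt_iff hLne).mp hcon
    have hpW : p ∈ W := by rw [← hW1] at hp; exact hp
    set t : ℝ := 3 * (κ * r) / 4 with ht_def
    set ρ : ℝ := κ * r / 8 with hρ_def
    have ht0 : 0 ≤ t := by positivity
    have hρ0 : 0 ≤ ρ := by positivity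
    set f : Euc d → ℝ := fun y => max (t - dist y x) 0 with hf_def
    have hf_nonneg : ∀ y, 0 ≤ f y := fun y => le_max_right _ _
    have hf_le : ∀ y, f y ≤ t := fun y =>
      max_le (by linarith [dist_nonneg (x := y) (y := x)]) ht0
    have hflip : LipschitzWith 1 f := by
      apply LipschitzWith.of_le_add
      intro a b
      have htri : dist b x ≤ dist a b + dist a x := by
        rw [dist_comm a b]; exact dist_triangle b a x
      refine max_le ?_ ?_
      · have : t - dist a x ≤ (t - dist b x) + dist a b := by linarith
        calc t - dist a x ≤ (t - dist b x) + dist a b := this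
          _ ≤ max (t - dist b x) 0 + dist a b := by
              gcongr; exact le_max_left _ _
      · have : (0:ℝ) ≤ max (t - dist b x) 0 + dist a b := by
          have := dist_nonneg (x := a) (y := b)
          have := le_max_right (t - dist b x) (0:ℝ)
          linarith
        exact this
    have hfc : Continuous f := by
      apply Continuous.max _ continuous_const
      exact continuous_const.sub (continuous_id.dist continuous_const)
    -- support of f
    have hf_zero : ∀ y, t < dist y x → f y = 0 := fun y hy =>
      max_eq_right (by linarith)
    have hsupp : tsupport f ⊆ closedBall x₀ (4 * r) := by
      have h1 : tsupport f ⊆ closedBall x t := by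
        apply closure_minimal _ isClosed_closedBall
        intro y hy
        simp only [Function.mem_support] at hy
        by_contra hyb
        exact hy (hf_zero y (by simpa [mem_closedBall, not_le] using hyb))
      refine h1.trans (closedBall_subset_closedBall' ?_)
      have h2 : dist x x₀ ≤ r := mem_closedBall.mp hx
      have : t ≤ 3 * r / 4 := by rw [ht_def]; nlinarith
      linarith
    -- ∫ f dμ = 0
    have hμint : (∫ y, f y ∂μ) = 0 := by
      apply integral_eq_zero_of_ae
      have hsub : {y | ¬ f y = 0} ⊆ (msupport μ)ᶜ := by
        intro y hy
        simp only [mem_setOf_eq] at hy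
        intro hym
        apply hy
        have h1 : κ * r ≤ dist x y := le_trans hxfar (infDist_le_dist_of_mem hym)
        apply hf_zero
        rw [dist_comm]
        have : 0 < κ * r := by positivity
        rw [ht_def]; linarith
      have : μ {y | ¬ f y = 0} = 0 := measure_mono_null hsub hμ0
      filter_upwards [(MeasureTheory.ae_iff).mpr this] with y hy using hy
    obtain ⟨φ, hφiso, himgW⟩ := exists_plane_isometry W hW2 hpW
    have himg : ∀ R : ℝ, φ '' closedBall 0 R = L ∩ closedBall p R := by
      intro R; rw [himgW R, hW1]
    have hLmeas : MeasurableSet L := by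
      rw [← hW1]
      exact (AffineSubspace.closed_of_finiteDimensional W).measurableSet
    have hn0 : (0:ℝ) ≤ (n:ℝ) := Nat.cast_nonneg n
    -- Hausdorff measure of pieces of L
    have hμHim : ∀ R : ℝ, (μH[(n:ℝ)] : Measure (Euc d)) (L ∩ closedBall p R)
        = (μH[(n:ℝ)] : Measure (EuclideanSpace ℝ (Fin n))) (closedBall 0 R) := by
      intro R
      rw [← himg R, hφiso.hausdorffMeasure_image (Or.inl hn0)]
    set m : Measure (Euc d) := (μH[(n:ℝ)] : Measure (Euc d)).restrict L with hm_def
    -- integrability of f with respect to m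
    set K : Set (Euc d) := closedBall x t with hK_def
    have hKL_fin : (μH[(n:ℝ)] : Measure (Euc d)) (K ∩ L) < ⊤ := by
      have hsub : K ∩ L ⊆ L ∩ closedBall p (t + κ * r / 2) := by
        rintro y ⟨hyK, hyL⟩
        refine ⟨hyL, ?_⟩
        rw [mem_closedBall]
        have h1 : dist y x ≤ t := mem_closedBall.mp hyK
        have h2 : dist y p ≤ dist y x + dist x p := dist_triangle y x p
        linarith [hxp.le]
      calc (μH[(n:ℝ)] : Measure (Euc d)) (K ∩ L)
          ≤ (μH[(n:ℝ)] : Measure (Euc d)) (L ∩ closedBall p (t + κ * r / 2)) :=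
            measure_mono hsub
        _ = (μH[(n:ℝ)] : Measure (EuclideanSpace ℝ (Fin n)))
              (closedBall 0 (t + κ * r / 2)) := hμHim _
        _ < ⊤ := measure_closedBall_lt_top
    have hInt : Integrable f m := by
      have hIOn : IntegrableOn f K m := by
        haveI : IsFiniteMeasure (m.restrict K) := by
          constructor
          rw [Measure.restrict_apply_univ, hm_def,
            Measure.restrict_apply measurableSet_closedBall]
          exact hKL_fin
        refine (integrable_const t).mono' hfc.aestronglyMeasurable ?_
        filter_upwards with a
        rw [Real.norm_eq_abs, abs_of_nonneg (hf_nonneg a)]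
        exact hf_le a
      apply hIOn.integrable_of_forall_notMem_eq_zero
      intro y hy
      apply hf_zero
      rw [hK_def, mem_closedBall, not_le] at hy
      exact hy
    -- the small disc S
    set S : Set (Euc d) := L ∩ closedBall p ρ with hS_def
    have hSmeas : MeasurableSet S := hLmeas.inter measurableSet_closedBall
    have hmS : m S = ENNReal.ofReal (ρ ^ n) * cnE := by
      rw [hm_def, Measure.restrict_apply hSmeas]
      have : S ∩ L = S := inter_eq_left.mpr (inter_subset_left)
      rw [this, hS_def, hμHim ρ,
        Measure.addHaar_closedBall _ _ hρ0, finrank_euclideanSpace_fin]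
    have hmS_fin : m S ≠ ⊤ := by
      rw [hmS]; exact ENNReal.mul_ne_top ENNReal.ofReal_ne_top hcnE_fin
    have hmS_toReal : (m S).toReal = ρ ^ n * cn := by
      rw [hmS, ENNReal.toReal_mul, ENNReal.toReal_ofReal (by positivity)]
    -- lower bound on f over S
    have hfS : ∀ y ∈ S, ρ ≤ f y := by
      rintro y ⟨hyL, hyb⟩
      have h1 : dist y p ≤ ρ := mem_closedBall.mp hyb
      have h2 : dist y x ≤ dist y p + dist p x := dist_triangle y p x
      have h3 : dist p x < κ * r / 2 := by rw [dist_comm]; exact hxp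
      have h4 : ρ ≤ t - dist y x := by rw [hρ_def, ht_def]; linarith [hρ_def, ht_def]
      exact h4.trans (le_max_left _ _)
    have hI_lb : ρ ^ (n+1) * cn ≤ ∫ y in L, f y ∂(μH[(n:ℝ)]) := by
      have h1 : ρ * (m S).toReal ≤ ∫ y in S, f y ∂m :=
        by have := setIntegral_ge_of_const_le_real hSmeas hmS_fin hfS hInt.integrableOn
           exact this
      have h2 : ∫ y in S, f y ∂m ≤ ∫ y, f y ∂m :=
        setIntegral_le_integral hInt (Filter.Eventually.of_forall hf_nonneg)
      have h3 : ρ ^ (n+1) * cn = ρ * (m S).toReal := by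
        rw [hmS_toReal, pow_succ]; ring
      calc ρ ^ (n+1) * cn = ρ * (m S).toReal := h3
        _ ≤ ∫ y in S, f y ∂m := h1
        _ ≤ ∫ y, f y ∂m := h2
    -- compare with hypothesis
    set I : ℝ := ∫ y in L, f y ∂(μH[(n:ℝ)]) with hI_def
    have hcomp' := hcomp f hflip hsupp
    rw [hμint, zero_sub, abs_neg, abs_of_nonneg (by positivity : (0:ℝ) ≤ c * I)] at hcomp'
    have hcI_lb : c₁ * (ρ ^ (n+1) * cn) ≤ c * I :=
      mul_le_mul hc hI_lb (by positivity) hc0.le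
    have hub : ε * (2*r)^(n+1) ≤ (c₁ * (κ/8)^(n+1) * cn / 2^(n+2)) * (2*r)^(n+1) := by
      gcongr
    have heq : (c₁ * (κ/8)^(n+1) * cn / 2^(n+2)) * (2*r)^(n+1)
        = c₁ * (ρ ^ (n+1) * cn) / 2 := by
      have hρr : ρ = (κ/8) * r := by rw [hρ_def]; ring
      rw [hρr, mul_pow, mul_pow, pow_succ 2 (n+1)]
      have h2 : (2:ℝ)^(n+1) ≠ 0 := by positivity
      field_simp
    have hpos : 0 < c₁ * (ρ ^ (n+1) * cn) := by
      have : 0 < ρ := by positivity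
      positivity
    linarith [hcomp', hub, hcI_lb, heq.symm.le]
  refine ⟨key, ?_⟩
  rw [eq_empty_iff_forall_notMem]
  rintro y ⟨hy1, hy2⟩
  have h1 : infDist x L ≤ dist x y := infDist_le_dist_of_mem hy2
  have h2 : dist x y < κ * r / 2 := by rw [dist_comm]; exact mem_ball.mp hy1
  linarith
end
end

section
/- Let 0 < n < d be integers. There is a constant C = C(n,d) < ∞ with the following property. Let z ∈ ℝ^d, R > 0, let L, L′ ⊂ ℝ^d be n-dimensional affine subspaces both intersecting B(z,R), and suppose the Hausdorff distance satisfies d_H(L ∩ B(z,2R), L′ ∩ B(z,2R)) ≤ δ for some 0 ≤ δ ≤ R. Then for every Lipschitz function f : ℝ^d → ℝ with Lipschitz constant at most Λ and supp f ⊂ B(z,R), one has | ∫_L f dℋⁿ − ∫_{L′} f dℋⁿ | ≤ C Λ δ Rⁿ. -/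
open MeasureTheory Metric Set
open scoped ENNReal NNReal

noncomputable section

section Aux
open Module
open scoped RealInnerProductSpace

def gsC : ℕ → ℝ
  | 0 => 0
  | (k+1) => 2 * (1 + k * (1 + gsC k))

lemma gsC_nonneg : ∀ k, 0 ≤ gsC k
  | 0 => le_refl 0
  | (k+1) => by have := gsC_nonneg k; simp only [gsC]; positivity

lemma gsC_mono : Monotone gsC := by
  apply monotone_nat_of_le_succ
  intro k
  induction k with
  | zero => simp [gsC]
  | succ k ih =>
      have h0 := gsC_nonneg k
      show gsC (k+1) ≤ gsC (k+2)
      simp only [gsC] at ih ⊢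
      push_cast
      nlinarith [gsC_nonneg (k+1)]

variable {E : Type*} [NormedAddCommGroup E] [InnerProductSpace ℝ E]

lemma gs_quant (V' : Submodule ℝ E) (n : ℕ) (e : ℕ → E)
    (hnorm : ∀ i < n, ‖e i‖ = 1)
    (horth : ∀ i < n, ∀ j < n, i ≠ j → ⟪e i, e j⟫ = 0)
    (ε : ℝ) (hε0 : 0 ≤ ε) (hεs : (1 + n * (1 + gsC n)) * ε ≤ 1/2)
    (hw : ∀ i < n, ∃ w ∈ V', ‖w - e i‖ ≤ ε) :
    ∃ F : ℕ → E, (∀ i < n, F i ∈ V') ∧ (∀ i < n, ‖F i‖ = 1) ∧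
      (∀ i < n, ∀ j < n, i ≠ j → ⟪F i, F j⟫ = 0) ∧
      (∀ i < n, ‖F i - e i‖ ≤ gsC n * ε) := by
  suffices H : ∀ k ≤ n, ∃ F : ℕ → E, (∀ i < k, F i ∈ V') ∧ (∀ i < k, ‖F i‖ = 1) ∧
      (∀ i < k, ∀ j < k, i ≠ j → ⟪F i, F j⟫ = 0) ∧
      (∀ i < k, ‖F i - e i‖ ≤ gsC (i+1) * ε) by
    obtain ⟨F, h1, h2, h3, h4⟩ := H n le_rfl
    exact ⟨F, h1, h2, h3, fun i hi => (h4 i hi).trans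
      (mul_le_mul_of_nonneg_right (gsC_mono hi) hε0)⟩
  intro k hk
  induction k with
  | zero => exact ⟨fun _ => 0, by simp, by simp, by simp, by simp⟩
  | succ k ih =>
      obtain ⟨F, hmem, hn1, ho, hb⟩ := ih (le_of_lt hk)
      have hkn : k < n := hk
      obtain ⟨w, hwV, hwe⟩ := hw k hkn
      -- uniform bound on old errors
      have hbK : ∀ j < k, ‖F j - e j‖ ≤ gsC k * ε := fun j hj =>
        (hb j hj).trans (mul_le_mul_of_nonneg_right (gsC_mono hj) hε0)
      -- bound on inner products
      have hip : ∀ j < k, |⟪w, F j⟫| ≤ (1 + gsC k) * ε := by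
        intro j hj
        have hdecomp : ⟪w, F j⟫ = ⟪w - e k, F j⟫ + ⟪e k, F j - e j⟫ + ⟪e k, e j⟫ := by
          rw [inner_sub_left, inner_sub_right]; ring
        have h1 : |⟪w - e k, F j⟫| ≤ ε := by
          calc |⟪w - e k, F j⟫| ≤ ‖w - e k‖ * ‖F j‖ := abs_real_inner_le_norm _ _
            _ ≤ ε * 1 := by
                apply mul_le_mul hwe (le_of_eq (hn1 j hj)) (norm_nonneg _) hε0
            _ = ε := mul_one _
        have h2 : |⟪e k, F j - e j⟫| ≤ gsC k * ε := by
          calc |⟪e k, F j - e j⟫| ≤ ‖e k‖ * ‖F j - e j‖ := abs_real_inner_le_norm _ _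
            _ = ‖F j - e j‖ := by rw [hnorm k hkn, one_mul]
            _ ≤ gsC k * ε := hbK j hj
        have h3 : ⟪e k, e j⟫ = 0 := horth k hkn j (hj.trans hkn) (ne_of_gt hj)
        calc |⟪w, F j⟫| ≤ |⟪w - e k, F j⟫| + |⟪e k, F j - e j⟫| + |⟪e k, e j⟫| := by
              rw [hdecomp]; exact (abs_add_le _ _).trans (add_le_add_left (abs_add_le _ _) _)
          _ ≤ ε + gsC k * ε + 0 := by
              rw [h3, abs_zero]
              exact add_le_add (add_le_add h1 h2) le_rfl
          _ = (1 + gsC k) * ε := by ring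
      -- the new vector before normalization
      set w' : E := w - ∑ j ∈ Finset.range k, ⟪w, F j⟫ • F j with hw'def
      have hw'V : w' ∈ V' := by
        apply Submodule.sub_mem _ hwV
        exact Submodule.sum_mem _ fun j hj =>
          Submodule.smul_mem _ _ (hmem j (Finset.mem_range.mp hj))
      have horthw' : ∀ j < k, ⟪F j, w'⟫ = 0 := by
        intro j hj
        rw [hw'def, inner_sub_right, inner_sum]
        have hsum : ∑ j' ∈ Finset.range k, ⟪F j, ⟪w, F j'⟫ • F j'⟫ = ⟪w, F j⟫ := by
          rw [Finset.sum_eq_single j]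
          · rw [real_inner_smul_right, real_inner_self_eq_norm_sq, hn1 j hj]
            ring
          · intro j' hj' hne
            rw [real_inner_smul_right, ho j hj j' (Finset.mem_range.mp hj') (Ne.symm hne)]
            ring
          · intro h; exact absurd (Finset.mem_range.mpr hj) h
        rw [hsum, real_inner_comm, sub_self]
      -- error bound for w'
      have hsumbd : ‖∑ j ∈ Finset.range k, ⟪w, F j⟫ • F j‖ ≤ k * ((1 + gsC k) * ε) := by
        calc ‖∑ j ∈ Finset.range k, ⟪w, F j⟫ • F j‖
            ≤ ∑ j ∈ Finset.range k, ‖⟪w, F j⟫ • F j‖ := norm_sum_le _ _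
          _ ≤ ∑ j ∈ Finset.range k, (1 + gsC k) * ε := by
              apply Finset.sum_le_sum
              intro j hj
              rw [norm_smul, Real.norm_eq_abs, hn1 j (Finset.mem_range.mp hj), mul_one]
              exact hip j (Finset.mem_range.mp hj)
          _ = k * ((1 + gsC k) * ε) := by rw [Finset.sum_const, Finset.card_range]; ring
      have hδk : ‖w' - e k‖ ≤ (1 + k * (1 + gsC k)) * ε := by
        have : w' - e k = (w - e k) - ∑ j ∈ Finset.range k, ⟪w, F j⟫ • F j := by
          rw [hw'def]; abel
        rw [this]
        calc ‖(w - e k) - ∑ j ∈ Finset.range k, ⟪w, F j⟫ • F j‖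
            ≤ ‖w - e k‖ + ‖∑ j ∈ Finset.range k, ⟪w, F j⟫ • F j‖ := norm_sub_le _ _
          _ ≤ ε + k * ((1 + gsC k) * ε) := add_le_add hwe hsumbd
          _ = (1 + k * (1 + gsC k)) * ε := by ring
      have hδhalf : (1 + k * (1 + gsC k)) * ε ≤ 1/2 := by
        refine le_trans ?_ hεs
        apply mul_le_mul_of_nonneg_right ?_ hε0
        have h1 : gsC k ≤ gsC n := gsC_mono (le_of_lt hkn)
        have h2 : (k : ℝ) ≤ n := Nat.cast_le.mpr (le_of_lt hkn)
        have h3 := gsC_nonneg k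
        nlinarith
      have hek1 : ‖e k‖ = 1 := hnorm k hkn
      have hnw' : 1/2 ≤ ‖w'‖ := by
        have := abs_norm_sub_norm_le w' (e k)
        rw [hek1] at this
        have := abs_le.mp this
        linarith [hδk.trans hδhalf, this.1]
      have hw'ne : ‖w'‖ ≠ 0 := by positivity
      set g : E := ‖w'‖⁻¹ • w' with hgdef
      have hgV : g ∈ V' := Submodule.smul_mem _ _ hw'V
      have hgnorm : ‖g‖ = 1 := by
        rw [hgdef, norm_smul, norm_inv, norm_norm, inv_mul_cancel₀ hw'ne]
      have hgw' : ‖g - w'‖ ≤ (1 + k * (1 + gsC k)) * ε := by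
        have h1 : g - w' = (‖w'‖⁻¹ - 1) • w' := by rw [hgdef, sub_smul, one_smul]
        rw [h1, norm_smul, Real.norm_eq_abs]
        have h2 : |‖w'‖⁻¹ - 1| * ‖w'‖ = |1 - ‖w'‖| := by
          rw [← abs_of_nonneg (norm_nonneg w'), ← abs_mul]
          rw [abs_of_nonneg (norm_nonneg w')]
          congr 1
          field_simp
        rw [h2]
        have := abs_norm_sub_norm_le w' (e k)
        rw [hek1] at this
        have h3 : |1 - ‖w'‖| = |‖w'‖ - 1| := abs_sub_comm _ _
        rw [h3]
        exact this.trans hδk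
      have hge : ‖g - e k‖ ≤ gsC (k+1) * ε := by
        have : ‖g - e k‖ ≤ ‖g - w'‖ + ‖w' - e k‖ := norm_sub_le_norm_sub_add_norm_sub g w' (e k)
        have h2 : gsC (k+1) * ε = 2 * ((1 + k * (1 + gsC k)) * ε) := by
          show (2 * (1 + (k:ℝ) * (1 + gsC k))) * ε = _
          ring
        rw [h2]
        linarith [hgw', hδk]
      have horthg : ∀ j < k, ⟪F j, g⟫ = 0 := by
        intro j hj
        rw [hgdef, real_inner_smul_right, horthw' j hj, mul_zero]
      -- assemble
      refine ⟨fun i => if i = k then g else F i, ?_, ?_, ?_, ?_⟩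
      · intro i hi
        by_cases h : i = k
        · simpa [h] using hgV
        · simpa [h] using hmem i (lt_of_le_of_ne (Nat.lt_succ_iff.mp hi) h)
      · intro i hi
        by_cases h : i = k
        · simpa [h] using hgnorm
        · simpa [h] using hn1 i (lt_of_le_of_ne (Nat.lt_succ_iff.mp hi) h)
      · intro i hi j hj hne
        by_cases h1 : i = k
        · have h2 : j ≠ k := fun h => hne (h1.trans h.symm)
          have hjk : j < k := lt_of_le_of_ne (Nat.lt_succ_iff.mp hj) h2
          simp only [h1, if_pos rfl, if_neg h2]
          rw [real_inner_comm]
          exact horthg j hjk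
        · have hik : i < k := lt_of_le_of_ne (Nat.lt_succ_iff.mp hi) h1
          by_cases h2 : j = k
          · simp only [if_neg h1, h2, if_pos rfl]
            exact horthg i hik
          · have hjk : j < k := lt_of_le_of_ne (Nat.lt_succ_iff.mp hj) h2
            simp only [if_neg h1, if_neg h2]
            exact ho i hik j hjk hne
      · intro i hi
        by_cases h : i = k
        · subst h; simpa using hge
        · simpa [h] using hb i (lt_of_le_of_ne (Nat.lt_succ_iff.mp hi) h)

variable {E : Type*} [NormedAddCommGroup E] [InnerProductSpace ℝ E] [FiniteDimensional ℝ E]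

/-- From an ε-approximation hypothesis, an isometry `V ≃ V'` moving vectors by `≤ n·gsC n·ε`. -/
lemma exists_isometry (n : ℕ) (hn : 0 < n) (V V' : Submodule ℝ E)
    (hV : finrank ℝ V = n) (hV' : finrank ℝ V' = n)
    (ε : ℝ) (hε0 : 0 ≤ ε) (hεs : (1 + n * (1 + gsC n)) * ε ≤ 1/2)
    (hw : ∀ v ∈ V, ‖v‖ = 1 → ∃ w ∈ V', ‖w - v‖ ≤ ε) :
    ∃ u : V ≃ₗᵢ[ℝ] V', ∀ v : V, ‖(u v : E) - (v : E)‖ ≤ (n * gsC n) * ε * ‖v‖ := by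
  have : Nonempty (Fin n) := ⟨⟨0, hn⟩⟩
  set b : OrthonormalBasis (Fin n) ℝ V := (stdOrthonormalBasis ℝ V).reindex (finCongr hV)
  set e : ℕ → E := fun i => if h : i < n then (b ⟨i, h⟩ : E) else 0 with hedef
  have hbo : Orthonormal ℝ (fun i : Fin n => (b i : E)) := by
    have := b.orthonormal
    rw [orthonormal_iff_ite] at this ⊢
    intro i j
    have := this i j
    rwa [Submodule.coe_inner] at this
  have hnorm : ∀ i < n, ‖e i‖ = 1 := by
    intro i hi
    simp only [hedef, dif_pos hi]
    exact hbo.1 ⟨i, hi⟩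
  have horth : ∀ i < n, ∀ j < n, i ≠ j → ⟪e i, e j⟫ = 0 := by
    intro i hi j hj hne
    simp only [hedef, dif_pos hi, dif_pos hj]
    exact hbo.2 (by simp [Fin.ext_iff, hne] : (⟨i, hi⟩ : Fin n) ≠ ⟨j, hj⟩)
  have hw' : ∀ i < n, ∃ w ∈ V', ‖w - e i‖ ≤ ε := by
    intro i hi
    refine hw (e i) ?_ (hnorm i hi)
    simp only [hedef, dif_pos hi]
    exact (b ⟨i, hi⟩).2
  obtain ⟨F, hFmem, hFnorm, hForth, hFerr⟩ := gs_quant V' n e hnorm horth ε hε0 hεs hw'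
  -- orthonormal family in V'
  set f : Fin n → V' := fun i => ⟨F i, hFmem i i.2⟩ with hfdef
  have hfo : Orthonormal ℝ f := by
    constructor
    · intro i
      have : ‖(f i : E)‖ = 1 := hFnorm i i.2
      rwa [Submodule.norm_coe] at this
    · intro i j hne
      have h := hForth i i.2 j j.2 (by simpa [Fin.ext_iff] using hne)
      rw [Submodule.coe_inner]
      exact h
  have hcard : Fintype.card (Fin n) = finrank ℝ V' := by simp [hV']
  set fB : OrthonormalBasis (Fin n) ℝ V' :=
    (basisOfLinearIndependentOfCardEqFinrank hfo.linearIndependent hcard).toOrthonormalBasis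
      (by rwa [coe_basisOfLinearIndependentOfCardEqFinrank]) with hfBdef
  have hfB : ∀ i, fB i = f i := by
    intro i
    rw [hfBdef, Basis.coe_toOrthonormalBasis, coe_basisOfLinearIndependentOfCardEqFinrank]
  refine ⟨b.repr.trans fB.repr.symm, ?_⟩
  intro v
  set u : V ≃ₗᵢ[ℝ] V' := b.repr.trans fB.repr.symm with hudef
  have hub : ∀ i, u (b i) = fB i := by
    intro i
    simp only [hudef, LinearIsometryEquiv.trans_apply, b.repr_self]
    exact fB.repr.symm_apply_apply (fB i) ▸ by rw [fB.repr_self]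
  have hrepr : ∀ w : V, w = ∑ i, b.repr w i • b i := fun w => (b.sum_repr w).symm
  have huv : u v = ∑ i, b.repr v i • fB i := by
    conv_lhs => rw [hrepr v]
    rw [map_sum]
    congr 1; ext i
    rw [LinearIsometryEquiv.map_smul, hub]
  have hvE : (v : E) = ∑ i, b.repr v i • (b i : E) := by
    conv_lhs => rw [hrepr v]
    push_cast
    rfl
  have hdiff : (u v : E) - (v : E) = ∑ i, b.repr v i • ((fB i : E) - (b i : E)) := by
    rw [huv, hvE]
    push_cast
    rw [← Finset.sum_sub_distrib]
    congr 1; ext i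
    rw [smul_sub]
  rw [hdiff]
  have hcoef : ∀ i : Fin n, |b.repr v i| ≤ ‖v‖ := by
    intro i
    have h1 : b.repr v i = ⟪b i, v⟫ := b.repr_apply_apply v i
    rw [h1]
    calc |⟪b i, v⟫| ≤ ‖b i‖ * ‖v‖ := abs_real_inner_le_norm _ _
      _ = ‖v‖ := by rw [b.orthonormal.1 i, one_mul]
  have herr : ∀ i : Fin n, ‖(fB i : E) - (b i : E)‖ ≤ gsC n * ε := by
    intro i
    have : (fB i : E) = F i := by rw [hfB i]
    rw [this]
    have : (b i : E) = e i := by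
      simp only [hedef, dif_pos i.2]
    rw [this]
    exact hFerr i i.2
  calc ‖∑ i, b.repr v i • ((fB i : E) - (b i : E))‖
      ≤ ∑ i : Fin n, ‖b.repr v i • ((fB i : E) - (b i : E))‖ := norm_sum_le _ _
    _ ≤ ∑ _i : Fin n, ‖v‖ * (gsC n * ε) := by
        apply Finset.sum_le_sum
        intro i _
        rw [norm_smul, Real.norm_eq_abs]
        exact mul_le_mul (hcoef i) (herr i) (norm_nonneg _) (norm_nonneg _)
    _ = (n * gsC n) * ε * ‖v‖ := by
        rw [Finset.sum_const, Finset.card_univ, Fintype.card_fin]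
        ring

variable {E : Type*} [NormedAddCommGroup E] [InnerProductSpace ℝ E] [FiniteDimensional ℝ E]

/-- Combine an isometry `V ≃ V'` with an arbitrary isometry `Vᗮ ≃ V'ᗮ` into a global
linear isometry. -/
lemma exists_T_of_isometry (V V' : Submodule ℝ E) (hrk : finrank ℝ V = finrank ℝ V')
    (u : V ≃ₗᵢ[ℝ] V') :
    ∃ T : E →ₗᵢ[ℝ] E, (∀ v : V, T v = (u v : E)) ∧ (∀ w ∈ V', ∃ v ∈ V, T v = w) := by
  have hperp : finrank ℝ (Vᗮ : Submodule ℝ E) = finrank ℝ (V'ᗮ : Submodule ℝ E) := by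
    have h1 := V.finrank_add_finrank_orthogonal
    have h2 := V'.finrank_add_finrank_orthogonal
    omega
  set u2 : (Vᗮ : Submodule ℝ E) ≃ₗᵢ[ℝ] (V'ᗮ : Submodule ℝ E) :=
    (stdOrthonormalBasis ℝ (Vᗮ : Submodule ℝ E)).repr.trans
      (((stdOrthonormalBasis ℝ (V'ᗮ : Submodule ℝ E)).reindex (finCongr hperp.symm)).repr.symm)
  set P : E →L[ℝ] V := Submodule.orthogonalProjectionOnto V
  set P2 : E →L[ℝ] (Vᗮ : Submodule ℝ E) := Submodule.orthogonalProjectionOnto Vᗮ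
  set g : E →ₗ[ℝ] E :=
    (V'.subtype.comp (u.toLinearEquiv.toLinearMap.comp (P : E →ₗ[ℝ] V))) +
    (V'ᗮ.subtype.comp (u2.toLinearEquiv.toLinearMap.comp (P2 : E →ₗ[ℝ] Vᗮ))) with hgdef
  have hgapply : ∀ x : E, g x = (u (P x) : E) + (u2 (P2 x) : E) := fun x => rfl
  have hinner : ∀ x y : E, ⟪g x, g y⟫ = ⟪x, y⟫ := by
    intro x y
    rw [hgapply, hgapply]
    rw [inner_add_left, inner_add_right, inner_add_right]
    have c1 : ⟪(u (P x) : E), (u2 (P2 y) : E)⟫ = 0 :=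
      Submodule.inner_right_of_mem_orthogonal (u (P x)).2 (u2 (P2 y)).2
    have c2 : ⟪(u2 (P2 x) : E), (u (P y) : E)⟫ = 0 := by
      rw [real_inner_comm]
      exact Submodule.inner_right_of_mem_orthogonal (u (P y)).2 (u2 (P2 x)).2
    have m1 : ⟪(u (P x) : E), (u (P y) : E)⟫ = ⟪(P x : E), (P y : E)⟫ := by
      rw [← Submodule.coe_inner, ← Submodule.coe_inner, LinearIsometryEquiv.inner_map_map]
    have m2 : ⟪(u2 (P2 x) : E), (u2 (P2 y) : E)⟫ = ⟪(P2 x : E), (P2 y : E)⟫ := by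
      rw [← Submodule.coe_inner, ← Submodule.coe_inner, LinearIsometryEquiv.inner_map_map]
    have hx := Submodule.starProjection_add_starProjection_orthogonal (K := V) x
    have hy := Submodule.starProjection_add_starProjection_orthogonal (K := V) y
    have hexp : ⟪x, y⟫ = ⟪(P x : E), (P y : E)⟫ + ⟪(P2 x : E), (P2 y : E)⟫ := by
      conv_lhs => rw [← hx, ← hy]
      rw [inner_add_left, inner_add_right, inner_add_right]
      have d1 : ⟪(P x : E), ((Submodule.orthogonalProjectionOnto Vᗮ y : Vᗮ) : E)⟫ = 0 :=
        Submodule.inner_right_of_mem_orthogonal (P x).2 (Submodule.orthogonalProjectionOnto Vᗮ y).2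
      have d2 : ⟪((Submodule.orthogonalProjectionOnto Vᗮ x : Vᗮ) : E), (P y : E)⟫ = 0 := by
        rw [real_inner_comm]
        exact Submodule.inner_right_of_mem_orthogonal (P y).2 (Submodule.orthogonalProjectionOnto Vᗮ x).2
      show ⟪(P x : E), (P y : E)⟫ + ⟪(P x : E), ((Submodule.orthogonalProjectionOnto Vᗮ y : Vᗮ) : E)⟫ +
        (⟪((Submodule.orthogonalProjectionOnto Vᗮ x : Vᗮ) : E), (P y : E)⟫ +
         ⟪((Submodule.orthogonalProjectionOnto Vᗮ x : Vᗮ) : E), ((Submodule.orthogonalProjectionOnto Vᗮ y : Vᗮ) : E)⟫) = _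
      rw [d1, d2]
      ring_nf
      rfl
    rw [m1, m2, c1, c2, hexp]
    ring
  refine ⟨g.isometryOfInner hinner, ?_, ?_⟩
  · intro v
    rw [LinearMap.coe_isometryOfInner, hgapply]
    have h1 : P (v : E) = v := by
      ext
      exact congrArg Subtype.val (Submodule.orthogonalProjectionOnto_mem_subspace_eq_self v)
    have h2 : P2 (v : E) = 0 :=
      Submodule.orthogonalProjectionOnto_apply_of_mem_orthogonal (K := Vᗮ) (V.le_orthogonal_orthogonal v.2)
    rw [h1, h2, map_zero, Submodule.coe_zero, add_zero]
  · intro w hw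
    refine ⟨(u.symm ⟨w, hw⟩ : E), (u.symm ⟨w, hw⟩).2, ?_⟩
    rw [LinearMap.coe_isometryOfInner, hgapply]
    have h1 : P ((u.symm ⟨w, hw⟩ : E)) = u.symm ⟨w, hw⟩ := by
      ext
      exact congrArg Subtype.val (Submodule.orthogonalProjectionOnto_mem_subspace_eq_self (u.symm ⟨w, hw⟩))
    have h2 : P2 ((u.symm ⟨w, hw⟩ : E)) = 0 :=
      Submodule.orthogonalProjectionOnto_apply_of_mem_orthogonal (K := Vᗮ) (V.le_orthogonal_orthogonal (u.symm ⟨w, hw⟩).2)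
    rw [h1, h2, map_zero, Submodule.coe_zero, add_zero, u.apply_symm_apply]


lemma plane_measure_bound {d n : ℕ} (hn : 0 < n) (W : AffineSubspace ℝ (Euc d))
    (hW : finrank ℝ W.direction = n) (x : Euc d) (r : ℝ) (hr : 0 ≤ r) :
    μH[(n : ℝ)] ((W : Set (Euc d)) ∩ closedBall x r) ≤
      ENNReal.ofReal ((4 * n) ^ n * r ^ n) := by
  have : Nonempty (Fin n) := ⟨⟨0, hn⟩⟩
  by_cases hne : ((W : Set (Euc d)) ∩ closedBall x r).Nonempty
  · obtain ⟨p, hpW, hpx⟩ := hne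
    set V := W.direction with hVdef
    set b : OrthonormalBasis (Fin n) ℝ V := (stdOrthonormalBasis ℝ V).reindex (finCongr hW)
      with hbdef
    set φ : EuclideanSpace ℝ (Fin n) → Euc d := fun t => p + (b.repr.symm t : Euc d) with hφdef
    have hφiso : Isometry φ := by
      apply Isometry.of_dist_eq
      intro s t
      rw [hφdef]
      simp only [dist_eq_norm]
      rw [add_sub_add_left_eq_sub, ← Submodule.coe_sub, ← map_sub]
      rw [Submodule.norm_coe, b.repr.symm.norm_map]
    have hsub : (W : Set (Euc d)) ∩ closedBall x r ⊆ φ '' closedBall 0 (2 * r) := by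
      rintro y ⟨hyW, hyx⟩
      have hv : y - p ∈ V := by
        rw [hVdef]
        have := (AffineSubspace.vsub_right_mem_direction_iff_mem hpW y).mpr hyW
        simpa [vsub_eq_sub] using this
      refine ⟨b.repr ⟨y - p, hv⟩, ?_, ?_⟩
      · rw [mem_closedBall_zero_iff, b.repr.norm_map]
        have h1 : ‖(⟨y - p, hv⟩ : V)‖ = ‖y - p‖ := rfl
        rw [h1]
        calc ‖y - p‖ ≤ ‖y - x‖ + ‖x - p‖ := norm_sub_le_norm_sub_add_norm_sub y x p
          _ ≤ r + r := by
              refine add_le_add ?_ ?_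
              · rwa [← dist_eq_norm]
              · rw [← dist_eq_norm, dist_comm]
                exact mem_closedBall.mp hpx
          _ = 2 * r := by ring
      · rw [hφdef]
        simp only [b.repr.symm_apply_apply]
        exact add_sub_cancel p y ▸ by abel_nf
    calc μH[(n : ℝ)] ((W : Set (Euc d)) ∩ closedBall x r)
        ≤ μH[(n : ℝ)] (φ '' closedBall 0 (2 * r)) := measure_mono hsub
      _ = μH[(n : ℝ)] (closedBall (0 : EuclideanSpace ℝ (Fin n)) (2 * r)) :=
          hφiso.hausdorffMeasure_image (Or.inl (by positivity)) _
      _ ≤ ENNReal.ofReal ((4 * n) ^ n * r ^ n) := by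
          set ι : (Fin n → ℝ) → EuclideanSpace ℝ (Fin n) := fun a => (WithLp.equiv 2 (Fin n → ℝ)).symm a
          have hlipK : LipschitzWith ((Fintype.card (Fin n) : ℝ≥0) ^ (1 / (2:ℝ≥0∞)).toReal) ι := by
            intro a c
            have := PiLp.antilipschitzWith_ofLp 2 (fun _ : Fin n => ℝ) (ι a) (ι c)
            simpa [ι] using this
          have hK : ((Fintype.card (Fin n) : ℝ≥0) ^ (1 / (2:ℝ≥0∞)).toReal) ≤ (n : ℝ≥0) := by
            rw [Fintype.card_fin]
            have h2 : (1 / (2:ℝ≥0∞)).toReal = (1/2 : ℝ) := by simp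
            rw [h2]
            calc (n : ℝ≥0) ^ (1/2 : ℝ) ≤ (n : ℝ≥0) ^ (1 : ℝ) := by
                  apply NNReal.rpow_le_rpow_of_exponent_le
                  · exact_mod_cast hn
                  · norm_num
              _ = (n : ℝ≥0) := NNReal.rpow_one _
          have hlip : LipschitzWith (n : ℝ≥0) ι := hlipK.weaken hK
          have hsub2 : closedBall (0 : EuclideanSpace ℝ (Fin n)) (2 * r) ⊆
              ι '' closedBall (0 : Fin n → ℝ) (2 * r) := by
            intro y hy
            refine ⟨WithLp.equiv 2 (Fin n → ℝ) y, ?_, rfl⟩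
            rw [mem_closedBall] at hy ⊢
            calc dist (WithLp.equiv 2 (Fin n → ℝ) y) (0 : Fin n → ℝ)
                = dist (WithLp.equiv 2 (Fin n → ℝ) y) (WithLp.equiv 2 (Fin n → ℝ) 0) := by
                  norm_num
              _ ≤ 1 * dist y 0 := by
                  have := (PiLp.lipschitzWith_ofLp 2 (fun _ : Fin n => ℝ)).dist_le_mul y 0
                  simpa using this
              _ ≤ 2 * r := by rw [one_mul]; exact hy
          calc μH[(n : ℝ)] (closedBall (0 : EuclideanSpace ℝ (Fin n)) (2 * r))
              ≤ μH[(n : ℝ)] (ι '' closedBall (0 : Fin n → ℝ) (2 * r)) := measure_mono hsub2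
            _ ≤ ((n : ℝ≥0) : ℝ≥0∞) ^ (n : ℝ) * μH[(n : ℝ)] (closedBall (0 : Fin n → ℝ) (2 * r)) :=
                hlip.hausdorffMeasure_image_le (by positivity) _
            _ = ((n : ℝ≥0) : ℝ≥0∞) ^ (n : ℝ) * volume (closedBall (0 : Fin n → ℝ) (2 * r)) := by
                congr 1
                have := hausdorffMeasure_pi_real (ι := Fin n)
                rw [Fintype.card_fin] at this
                rw [this]
            _ = ((n : ℝ≥0) : ℝ≥0∞) ^ (n : ℝ) * ENNReal.ofReal ((2 * (2 * r)) ^ n) := by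
                rw [Real.volume_pi_closedBall 0 (by positivity), Fintype.card_fin]
            _ ≤ ENNReal.ofReal ((4 * n) ^ n * r ^ n) := by
                rw [ENNReal.rpow_natCast]
                have h1 : ((n : ℝ≥0) : ℝ≥0∞) = ENNReal.ofReal (n : ℝ) := by
                  simp [ENNReal.ofReal_natCast]
                rw [h1, ← ENNReal.ofReal_pow (by positivity), ← ENNReal.ofReal_mul (by positivity)]
                apply ENNReal.ofReal_le_ofReal
                rw [← mul_pow, ← mul_pow]
                apply pow_le_pow_left₀ (by positivity)
                ring_nf
                nlinarith [hr, (Nat.cast_pos (α := ℝ)).mpr hn]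
  · rw [not_nonempty_iff_eq_empty] at hne
    rw [hne, measure_empty]
    exact zero_le


/-- Pushforward of restricted Hausdorff measure under an isometry mapping `L` onto `L'`. -/
lemma map_restrict_hausdorff {d n : ℕ} (ψ : Euc d → Euc d) (hψ : Isometry ψ)
    (L L' : Set (Euc d)) (hL : MeasurableSet L) (himg : ψ '' L = L') :
    Measure.map ψ (μH[(n : ℝ)].restrict L) = μH[(n : ℝ)].restrict L' := by
  ext s hs
  rw [Measure.map_apply hψ.continuous.measurable hs, Measure.restrict_apply hs,
    Measure.restrict_apply (hψ.continuous.measurable hs)]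
  have h1 : μH[(n : ℝ)] (ψ '' (ψ ⁻¹' s ∩ L)) = μH[(n : ℝ)] (ψ ⁻¹' s ∩ L) :=
    hψ.hausdorffMeasure_image (Or.inl (by positivity)) _
  rw [← h1]
  congr 1
  rw [Set.inter_comm, Set.image_inter_preimage ψ L s, himg, Set.inter_comm]

/-- Integrability of a bounded function vanishing (on `L`) outside a ball of finite
`μH`-measure. -/
lemma integrableOn_of_bounded_support {d n : ℕ} (L : Set (Euc d)) (hL : MeasurableSet L)
    (g : Euc d → ℝ) (hg : Continuous g) (z : Euc d) (r M : ℝ)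
    (hb : ∀ y, |g y| ≤ M) (h0 : ∀ y ∈ L, y ∉ closedBall z r → g y = 0)
    (hfin : μH[(n : ℝ)] (L ∩ closedBall z r) ≠ ⊤) :
    IntegrableOn g L μH[(n : ℝ)] := by
  have hLB : MeasurableSet (L ∩ closedBall z r) := hL.inter measurableSet_closedBall
  have hsplit : L = (L ∩ closedBall z r) ∪ (L \ closedBall z r) := by
    rw [Set.inter_union_diff]
  rw [hsplit]
  apply IntegrableOn.union
  · refine ⟨hg.aestronglyMeasurable, ?_⟩
    apply HasFiniteIntegral.restrict_of_bounded (C := M) (lt_top_iff_ne_top.mpr hfin)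
    filter_upwards with y
    rw [Real.norm_eq_abs]
    exact hb y
  · have : IntegrableOn (fun _ => (0:ℝ)) (L \ closedBall z r) μH[(n : ℝ)] := integrableOn_zero
    apply this.congr_fun
    · intro y hy
      exact (h0 y hy.1 hy.2).symm
    · exact hL.diff measurableSet_closedBall

end Aux

set_option maxHeartbeats 2000000 in
/-- if two `n`-planes `L, L'` both meet `B(z,R)` and are at Hausdorff
distance at most `δ ≤ R` inside `B(z,2R)`, then for any `Λ`-Lipschitz function `f`
supported in `B(z,R)` one has `|∫_L f dℋⁿ - ∫_{L'} f dℋⁿ| ≤ C Λ δ Rⁿ`. -/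
theorem statement9 (n d : ℕ) (hn : 0 < n) (hnd : n < d) :
    ∃ C : ℝ, 0 < C ∧
      ∀ (z : Euc d) (R δ : ℝ) (L L' : Set (Euc d)),
        0 < R → IsNPlane n L → IsNPlane n L' →
        (L ∩ closedBall z R).Nonempty → (L' ∩ closedBall z R).Nonempty →
        0 ≤ δ → δ ≤ R →
        hausdorffDist (L ∩ closedBall z (2 * R)) (L' ∩ closedBall z (2 * R)) ≤ δ →
        ∀ (Λ : ℝ) (f : Euc d → ℝ), 0 ≤ Λ →
          (∀ y y' : Euc d, |f y - f y'| ≤ Λ * dist y y') →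
          tsupport f ⊆ closedBall z R →
          |(∫ y in L, f y ∂(μH[(n : ℝ)])) - ∫ y in L', f y ∂(μH[(n : ℝ)])|
            ≤ C * Λ * δ * R ^ n := by
  classical
  have hgs0 := gsC_nonneg n
  have hn0R : (0:ℝ) < n := by exact_mod_cast hn
  set K : ℝ := n * gsC n with hKdef
  have hK0 : 0 ≤ K := by rw [hKdef]; positivity
  set B : ℝ := (1 + n * (1 + gsC n)) + K with hBdef
  have haux0 : (0:ℝ) ≤ 1 + n * (1 + gsC n) := by positivity
  have hB1 : (1:ℝ) ≤ B := by rw [hBdef]; nlinarith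
  have hB0 : (0:ℝ) < B := lt_of_lt_of_le one_pos hB1
  set η : ℝ := 1/(4*B) with hηdef
  have hη0 : (0:ℝ) < η := by rw [hηdef]; positivity
  set An : ℝ := (4*n)^n with hAndef
  have hAn0 : (0:ℝ) < An := by rw [hAndef]; positivity
  refine ⟨8*An/η + (1+14*K)*An*6^n + 1, by positivity, ?_⟩
  intro z R δ L L' hR hL hL' hLne hL'ne hδ0 hδR hHD Λ f hΛ hf hsupp
  obtain ⟨W, hWL, hWrk⟩ := hL
  obtain ⟨W', hW'L', hW'rk⟩ := hL'
  have hd0 : 0 < d := lt_of_le_of_lt (Nat.zero_le n) hnd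
  -- continuity of f
  have hfc : Continuous f := by
    have hlip : LipschitzWith Λ.toNNReal f := by
      apply LipschitzWith.of_dist_le_mul
      intro x y
      rw [Real.dist_eq, Real.coe_toNNReal Λ hΛ]
      exact hf x y
    exact hlip.continuous
  have hf0 : ∀ y, y ∉ closedBall z R → f y = 0 := fun y hy =>
    image_eq_zero_of_notMem_tsupport (fun h => hy (hsupp h))
  -- uniform bound on f
  have hfbound : ∀ y, |f y| ≤ 4*Λ*R := by
    intro y
    by_cases hy : y ∈ closedBall z R
    · set v0 : Euc d := EuclideanSpace.single (⟨0, hd0⟩ : Fin d) (1:ℝ) with hv0def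
      have hv0 : ‖v0‖ = 1 := by rw [hv0def, EuclideanSpace.norm_single, norm_one]
      set y₀ : Euc d := z + (3*R) • v0 with hy₀def
      have hdzy₀ : dist z y₀ = 3*R := by
        rw [hy₀def, dist_eq_norm]
        have : z - (z + (3*R) • v0) = -((3*R) • v0) := by abel
        rw [this, norm_neg, norm_smul, hv0, mul_one, Real.norm_eq_abs,
          abs_of_pos (by positivity)]
      have hy₀ : f y₀ = 0 := by
        apply hf0
        rw [mem_closedBall, dist_comm, hdzy₀]
        intro h
        linarith
      calc |f y| = |f y - f y₀| := by rw [hy₀, sub_zero]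
        _ ≤ Λ * dist y y₀ := hf y y₀
        _ ≤ Λ * (dist y z + dist z y₀) := by
            apply mul_le_mul_of_nonneg_left (dist_triangle _ _ _) hΛ
        _ ≤ 4*Λ*R := by
            have h1 : dist y z ≤ R := mem_closedBall.mp hy
            rw [hdzy₀]
            nlinarith
    · rw [hf0 y hy, abs_zero]
      positivity
  -- measurability
  have hLmeas : MeasurableSet L := by
    rw [← hWL]; exact W.closed_of_finiteDimensional.measurableSet
  have hL'meas : MeasurableSet L' := by
    rw [← hW'L']; exact W'.closed_of_finiteDimensional.measurableSet
  -- measure bounds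
  have hmeasL : ∀ r : ℝ, 0 ≤ r →
      μH[(n:ℝ)] (L ∩ closedBall z r) ≤ ENNReal.ofReal (An * r^n) := by
    intro r hr
    rw [← hWL, hAndef]
    exact plane_measure_bound hn W hWrk z r hr
  have hmeasL' : ∀ r : ℝ, 0 ≤ r →
      μH[(n:ℝ)] (L' ∩ closedBall z r) ≤ ENNReal.ofReal (An * r^n) := by
    intro r hr
    rw [← hW'L', hAndef]
    exact plane_measure_bound hn W' hW'rk z r hr
  have hfinL : μH[(n:ℝ)] (L ∩ closedBall z R) ≠ ⊤ :=
    ne_top_of_le_ne_top ENNReal.ofReal_ne_top (hmeasL R hR.le)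
  have hfinL' : μH[(n:ℝ)] (L' ∩ closedBall z R) ≠ ⊤ :=
    ne_top_of_le_ne_top ENNReal.ofReal_ne_top (hmeasL' R hR.le)
  have hintL : IntegrableOn f L μH[(n:ℝ)] :=
    integrableOn_of_bounded_support L hLmeas f hfc z R (4*Λ*R) hfbound
      (fun y _ hy => hf0 y hy) hfinL
  have hintL' : IntegrableOn f L' μH[(n:ℝ)] :=
    integrableOn_of_bounded_support L' hL'meas f hfc z R (4*Λ*R) hfbound
      (fun y _ hy => hf0 y hy) hfinL'
  -- a bound for a single integral
  have hsingle : ∀ (M : Set (Euc d)), MeasurableSet M →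
      (∀ r : ℝ, 0 ≤ r → μH[(n:ℝ)] (M ∩ closedBall z r) ≤ ENNReal.ofReal (An * r^n)) →
      |∫ y in M, f y ∂μH[(n:ℝ)]| ≤ 4*Λ*R * (An * R^n) := by
    intro M hM hbd
    set g : Euc d → ℝ := Set.indicator (closedBall z R) (fun _ => 4*Λ*R) with hgdef
    have hfinM : (μH[(n:ℝ)].restrict M) (closedBall z R) < ⊤ := by
      rw [Measure.restrict_apply measurableSet_closedBall, Set.inter_comm]
      exact lt_of_le_of_lt (hbd R hR.le) ENNReal.ofReal_lt_top
    have hgint : Integrable g (μH[(n:ℝ)].restrict M) := by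
      rw [hgdef, integrable_indicator_iff measurableSet_closedBall]
      exact (integrableOn_const_iff).mpr (Or.inr hfinM)
    have hae : ∀ᵐ y ∂(μH[(n:ℝ)].restrict M), ‖f y‖ ≤ g y := by
      apply ae_of_all
      intro y
      by_cases hy : y ∈ closedBall z R
      · rw [hgdef, Set.indicator_of_mem hy, Real.norm_eq_abs]
        exact hfbound y
      · rw [hgdef, Set.indicator_of_notMem hy, Real.norm_eq_abs, hf0 y hy, abs_zero]
    calc |∫ y in M, f y ∂μH[(n:ℝ)]| = ‖∫ y in M, f y ∂μH[(n:ℝ)]‖ := (Real.norm_eq_abs _).symm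
      _ ≤ ∫ y in M, g y ∂μH[(n:ℝ)] := norm_integral_le_of_norm_le hgint hae
      _ = ((μH[(n:ℝ)].restrict M) (closedBall z R)).toReal • (4*Λ*R) := by
          rw [hgdef]
          exact integral_indicator_const _ measurableSet_closedBall
      _ ≤ 4*Λ*R * (An * R^n) := by
          rw [smul_eq_mul, Measure.restrict_apply measurableSet_closedBall, Set.inter_comm]
          have h1 : (μH[(n:ℝ)] (M ∩ closedBall z R)).toReal ≤ An * R^n :=
            ENNReal.toReal_le_of_le_ofReal (by positivity) (hbd R hR.le)
          have h2 : (0:ℝ) ≤ 4*Λ*R := by positivity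
          nlinarith [ENNReal.toReal_nonneg (a := μH[(n:ℝ)] (M ∩ closedBall z R))]
  rcases le_or_gt (η * R) δ with hcase | hcase
  · -- trivial case : δ is comparable to R
    have h1 := hsingle L hLmeas hmeasL
    have h2 := hsingle L' hL'meas hmeasL'
    have h3 : |(∫ y in L, f y ∂μH[(n:ℝ)]) - ∫ y in L', f y ∂μH[(n:ℝ)]| ≤ 8*Λ*R*(An*R^n) :=
      le_trans (abs_sub _ _) (by linarith)
    have hRn : (0:ℝ) ≤ R^n := by positivity
    have key : An * R ≤ An/η * δ := by
      rw [div_mul_eq_mul_div, le_div_iff₀ hη0]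
      nlinarith
    have h4 : 8*Λ*R*(An*R^n) ≤ 8*An/η*Λ*δ*R^n := by
      have h5 : (0:ℝ) ≤ Λ * R^n := by positivity
      have h6 : 8*Λ*R*(An*R^n) = 8*(Λ*R^n)*(An*R) := by ring
      have h7 : 8*An/η*Λ*δ*R^n = 8*(Λ*R^n)*(An/η*δ) := by ring
      rw [h6, h7]
      nlinarith
    have h8 : 8*An/η*Λ*δ*R^n ≤ (8*An/η + (1+14*K)*An*6^n + 1)*Λ*δ*R^n := by
      have h9 : (0:ℝ) ≤ Λ*δ*R^n := by positivity
      have h10 : (0:ℝ) ≤ (1+14*K)*An*6^n := by positivity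
      have h11 : 8*An/η ≤ 8*An/η + (1+14*K)*An*6^n + 1 := by linarith
      calc 8*An/η*Λ*δ*R^n = (8*An/η)*(Λ*δ*R^n) := by ring
        _ ≤ (8*An/η + (1+14*K)*An*6^n + 1)*(Λ*δ*R^n) := mul_le_mul_of_nonneg_right h11 h9
        _ = (8*An/η + (1+14*K)*An*6^n + 1)*Λ*δ*R^n := by ring
    linarith
  · -- main case : δ < η * R
    set ε : ℝ := 2*δ/R with hεdef
    have hε0 : 0 ≤ ε := by rw [hεdef]; positivity
    have hc2 : δ < R/(4*B) := by
      have h : (1/(4*B))*R = R/(4*B) := by ring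
      rw [hηdef, h] at hcase
      exact hcase
    have h4B : δ*(4*B) < R := (lt_div_iff₀ (by positivity)).mp hc2
    have hBε : B * ε ≤ 1/2 := by
      rw [hεdef, ← mul_div_assoc, div_le_iff₀ hR]
      nlinarith
    have hsmall1 : (1 + n*(1+gsC n)) * ε ≤ 1/2 := by
      refine le_trans (mul_le_mul_of_nonneg_right ?_ hε0) hBε
      rw [hBdef]; linarith
    have hsmall2 : K * ε ≤ 1/2 := by
      refine le_trans (mul_le_mul_of_nonneg_right ?_ hε0) hBε
      rw [hBdef]; linarith
    -- points and Hausdorff-distance consequences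
    obtain ⟨q, hqL, hqz⟩ := hLne
    have hqW : q ∈ W := by rw [← hWL] at hqL; exact hqL
    have hSne : (L ∩ closedBall z (2*R)).Nonempty :=
      ⟨q, hqL, closedBall_subset_closedBall (by linarith) hqz⟩
    have hS'ne : (L' ∩ closedBall z (2*R)).Nonempty := by
      obtain ⟨p, hp1, hp2⟩ := hL'ne
      exact ⟨p, hp1, closedBall_subset_closedBall (by linarith) hp2⟩
    have hedist : EMetric.hausdorffEdist (L ∩ closedBall z (2*R)) (L' ∩ closedBall z (2*R)) ≠ ⊤ :=
      hausdorffEdist_ne_top_of_nonempty_of_bounded hSne hS'ne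
        (isBounded_closedBall.subset inter_subset_right)
        (isBounded_closedBall.subset inter_subset_right)
    have hS'closed : IsClosed (L' ∩ closedBall z (2*R)) := by
      rw [← hW'L']
      exact W'.closed_of_finiteDimensional.inter isClosed_closedBall
    have happrox : ∀ x ∈ L ∩ closedBall z (2*R), ∃ y ∈ L', dist x y ≤ δ := by
      intro x hx
      have h1 : infDist x (L' ∩ closedBall z (2*R)) ≤ δ :=
        le_trans (infDist_le_hausdorffDist_of_mem hx hedist) hHD
      obtain ⟨y, hy, hyd⟩ := hS'closed.exists_infDist_eq_dist hS'ne x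
      exact ⟨y, hy.1, by rw [← hyd]; exact h1⟩
    obtain ⟨q', hq'L', hqq'⟩ := happrox q ⟨hqL, closedBall_subset_closedBall (by linarith) hqz⟩
    have hq'W' : q' ∈ W' := by rw [← hW'L'] at hq'L'; exact hq'L'
    -- direction approximation
    have hw : ∀ v ∈ W.direction, ‖v‖ = 1 → ∃ w ∈ W'.direction, ‖w - v‖ ≤ ε := by
      intro v hv hv1
      set x : Euc d := R • v + q with hxdef
      have hxW : x ∈ W := AffineSubspace.vadd_mem_of_mem_direction
        (Submodule.smul_mem _ R hv) hqW
      have hxL : x ∈ L := by rw [← hWL]; exact hxW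
      have hxz : x ∈ closedBall z (2*R) := by
        rw [mem_closedBall]
        calc dist x z ≤ dist x q + dist q z := dist_triangle _ _ _
          _ ≤ R + R := by
              refine add_le_add ?_ (mem_closedBall.mp hqz)
              rw [hxdef, dist_eq_norm]
              have : R • v + q - q = R • v := by abel
              rw [this, norm_smul, hv1, mul_one, Real.norm_eq_abs, abs_of_pos hR]
          _ = 2*R := by ring
      obtain ⟨y, hyL', hxy⟩ := happrox x ⟨hxL, hxz⟩
      have hyW' : y ∈ W' := by rw [← hW'L'] at hyL'; exact hyL'
      refine ⟨R⁻¹ • (y - q'), Submodule.smul_mem _ _ ?_, ?_⟩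
      · have := AffineSubspace.vsub_mem_direction hyW' hq'W'
        simpa [vsub_eq_sub] using this
      · have hfact : R⁻¹ • ((y - q') - R • v) = R⁻¹ • (y - q') - v := by
          rw [smul_sub, smul_smul, inv_mul_cancel₀ (ne_of_gt hR), one_smul]
        rw [← hfact, norm_smul, Real.norm_eq_abs, abs_of_pos (by positivity)]
        have hdecomp : (y - q') - R • v = (y - x) + (q - q') := by
          rw [hxdef]; abel
        rw [hdecomp, hεdef]
        have h1 : ‖(y - x) + (q - q')‖ ≤ ‖y - x‖ + ‖q - q'‖ := norm_add_le _ _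
        have h2 : ‖y - x‖ ≤ δ := by rw [← dist_eq_norm, dist_comm]; exact hxy
        have h3 : ‖q - q'‖ ≤ δ := by rw [← dist_eq_norm]; exact hqq'
        rw [div_eq_inv_mul]
        have h4 : (0:ℝ) ≤ R⁻¹ := by positivity
        calc R⁻¹ * ‖(y - x) + (q - q')‖ ≤ R⁻¹ * (δ + δ) := by
              apply mul_le_mul_of_nonneg_left (by linarith) h4
          _ = R⁻¹ * (2*δ) := by ring
      -- isometry between the planes
    obtain ⟨u, hu⟩ := exists_isometry n hn W.direction W'.direction hWrk hW'rk ε hε0 hsmall1 hw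
    obtain ⟨T, hT1, hT2⟩ := exists_T_of_isometry W.direction W'.direction
      (by rw [hWrk, hW'rk]) u
    have hTmove : ∀ v (hv : v ∈ W.direction), ‖T v - v‖ ≤ K * ε * ‖v‖ := by
      intro v hv
      have h1 := hT1 ⟨v, hv⟩
      have h2 := hu ⟨v, hv⟩
      rw [hKdef]
      calc ‖T v - v‖ = ‖(u ⟨v, hv⟩ : Euc d) - v‖ := by rw [h1]
        _ ≤ (n * gsC n) * ε * ‖(⟨v, hv⟩ : W.direction)‖ := h2
        _ = (n * gsC n) * ε * ‖v‖ := rfl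
    set ψ : Euc d → Euc d := fun x => q' + T (x - q) with hψdef
    have hψiso : Isometry ψ := by
      apply Isometry.of_dist_eq
      intro a b
      rw [hψdef]
      simp only
      rw [dist_add_left, T.dist_map, dist_sub_right]
    have hψL : ψ '' L = L' := by
      apply Set.eq_of_subset_of_subset
      · rintro _ ⟨x, hxL, rfl⟩
        have hxW : x ∈ W := by rw [← hWL] at hxL; exact hxL
        have hxq : x - q ∈ W.direction := by
          have := AffineSubspace.vsub_mem_direction hxW hqW
          simpa [vsub_eq_sub] using this
        have h1 : T (x - q) ∈ W'.direction := by
          rw [hT1 ⟨x - q, hxq⟩]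
          exact (u ⟨x - q, hxq⟩).2
        rw [← hW'L']
        have := AffineSubspace.vadd_mem_of_mem_direction h1 hq'W'
        simpa [hψdef, vadd_eq_add, add_comm] using this
      · intro w hwL'
        have hwW' : w ∈ W' := by rw [← hW'L'] at hwL'; exact hwL'
        have hwq' : w - q' ∈ W'.direction := by
          have := AffineSubspace.vsub_mem_direction hwW' hq'W'
          simpa [vsub_eq_sub] using this
        obtain ⟨v, hvV, hvT⟩ := hT2 (w - q') hwq'
        refine ⟨q + v, ?_, ?_⟩
        · rw [← hWL]
          have := AffineSubspace.vadd_mem_of_mem_direction hvV hqW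
          simpa [vadd_eq_add, add_comm] using this
        · rw [hψdef]
          simp only
          have : q + v - q = v := by abel
          rw [this, hvT]
          abel
    -- transport the integral
    have hmap : Measure.map ψ (μH[(n:ℝ)].restrict L) = μH[(n:ℝ)].restrict L' :=
      map_restrict_hausdorff ψ hψiso L L' hLmeas hψL
    have hsubst : (∫ y in L', f y ∂μH[(n:ℝ)]) = ∫ y in L, f (ψ y) ∂μH[(n:ℝ)] := by
      rw [← hmap]
      exact integral_map hψiso.continuous.aemeasurable hfc.aestronglyMeasurable
    -- displacement bound
    have hmove : ∀ y ∈ L, ‖ψ y - y‖ ≤ δ + K * ε * ‖y - q‖ := by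
      intro y hyL
      have hyq : y - q ∈ W.direction := by
        have hyW : y ∈ W := by rw [← hWL] at hyL; exact hyL
        have := AffineSubspace.vsub_mem_direction hyW hqW
        simpa [vsub_eq_sub] using this
      have h1 : ψ y - y = (q' - q) + (T (y - q) - (y - q)) := by
        rw [hψdef]; simp only; abel
      rw [h1]
      calc ‖(q' - q) + (T (y - q) - (y - q))‖
          ≤ ‖q' - q‖ + ‖T (y - q) - (y - q)‖ := norm_add_le _ _
        _ ≤ δ + K * ε * ‖y - q‖ := by
            refine add_le_add ?_ (hTmove _ hyq)
            rw [← dist_eq_norm, dist_comm]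
            exact hqq'
    -- for y ∈ L outside the 6R-ball, both terms vanish
    have hKε2 : K * ε ≤ 1/2 := hsmall2
    have hvanish : ∀ y ∈ L, y ∉ closedBall z (6*R) → f y = 0 ∧ f (ψ y) = 0 := by
      intro y hyL hy6
      have hyz : 6*R < dist y z := by
        by_contra h
        push_neg at h
        exact hy6 (mem_closedBall.mpr h)
      constructor
      · apply hf0
        rw [mem_closedBall]
        intro h
        linarith
      · apply hf0
        rw [mem_closedBall]
        intro h
        have h1 : ‖y - q‖ ≤ dist y z + R := by
          calc ‖y - q‖ = dist y q := (dist_eq_norm _ _).symm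
            _ ≤ dist y z + dist z q := dist_triangle _ _ _
            _ ≤ dist y z + R := by
                have := mem_closedBall.mp hqz
                rw [dist_comm] at this
                linarith
        have h2 : dist y z ≤ dist (ψ y) z + ‖ψ y - y‖ := by
          calc dist y z ≤ dist y (ψ y) + dist (ψ y) z := dist_triangle _ _ _
            _ = dist (ψ y) z + ‖ψ y - y‖ := by
                rw [dist_eq_norm, ← norm_neg (y - ψ y)]
                have : -(y - ψ y) = ψ y - y := by abel
                rw [this]; ring
        have h3 := hmove y hyL
        have h4 : K * ε * ‖y - q‖ ≤ (1/2) * (dist y z + R) := by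
          have h5 : (0:ℝ) ≤ K * ε := mul_nonneg hK0 hε0
          have h6 : (0:ℝ) ≤ ‖y - q‖ := norm_nonneg _
          nlinarith [dist_nonneg (x := y) (y := z)]
        linarith
    -- pointwise bound on the difference
    have hptwise : ∀ y ∈ L, |f y - f (ψ y)| ≤
        Set.indicator (closedBall z (6*R)) (fun _ => Λ*((1+14*K)*δ)) y := by
      intro y hyL
      by_cases hy6 : y ∈ closedBall z (6*R)
      · rw [Set.indicator_of_mem hy6]
        have h1 : ‖y - q‖ ≤ 7*R := by
          calc ‖y - q‖ = dist y q := (dist_eq_norm _ _).symm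
            _ ≤ dist y z + dist z q := dist_triangle _ _ _
            _ ≤ 6*R + R := by
                refine add_le_add (mem_closedBall.mp hy6) ?_
                have := mem_closedBall.mp hqz
                rw [dist_comm] at this
                exact this
            _ = 7*R := by ring
        have h2 : K * ε * ‖y - q‖ ≤ 14*K*δ := by
          have h3 : K * ε * ‖y - q‖ ≤ K * ε * (7*R) := by
            apply mul_le_mul_of_nonneg_left h1 (mul_nonneg hK0 hε0)
          have h4 : K * ε * (7*R) = 14*K*δ := by
            rw [hεdef]
            field_simp
            ring
          linarith
        calc |f y - f (ψ y)| ≤ Λ * dist y (ψ y) := hf y (ψ y)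
          _ = Λ * ‖ψ y - y‖ := by
              rw [dist_eq_norm, ← norm_neg (y - ψ y)]
              have : -(y - ψ y) = ψ y - y := by abel
              rw [this]
          _ ≤ Λ * (δ + 14*K*δ) := by
              apply mul_le_mul_of_nonneg_left ?_ hΛ
              have := hmove y hyL
              linarith
          _ = Λ*((1+14*K)*δ) := by ring
      · rw [Set.indicator_of_notMem hy6]
        obtain ⟨e1, e2⟩ := hvanish y hyL hy6
        rw [e1, e2, sub_zero, abs_zero]
    -- integrability of f ∘ ψ on L
    have hfin6 : μH[(n:ℝ)] (L ∩ closedBall z (6*R)) ≠ ⊤ :=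
      ne_top_of_le_ne_top ENNReal.ofReal_ne_top (hmeasL (6*R) (by positivity))
    have hintψ : IntegrableOn (fun y => f (ψ y)) L μH[(n:ℝ)] := by
      apply integrableOn_of_bounded_support L hLmeas _ (hfc.comp hψiso.continuous) z (6*R)
        (4*Λ*R) (fun y => hfbound (ψ y)) ?_ hfin6
      intro y hyL hy6
      exact (hvanish y hyL hy6).2
    -- final estimate
    have hdiff : |(∫ y in L, f y ∂μH[(n:ℝ)]) - ∫ y in L', f y ∂μH[(n:ℝ)]| ≤
        Λ*((1+14*K)*δ) * (An * (6*R)^n) := by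
      rw [hsubst, ← integral_sub hintL hintψ]
      set g : Euc d → ℝ := Set.indicator (closedBall z (6*R)) (fun _ => Λ*((1+14*K)*δ))
        with hgdef
      have hfin6' : (μH[(n:ℝ)].restrict L) (closedBall z (6*R)) < ⊤ := by
        rw [Measure.restrict_apply measurableSet_closedBall, Set.inter_comm]
        exact lt_of_le_of_lt (hmeasL (6*R) (by positivity)) ENNReal.ofReal_lt_top
      have hgint : Integrable g (μH[(n:ℝ)].restrict L) := by
        rw [hgdef, integrable_indicator_iff measurableSet_closedBall]
        exact (integrableOn_const_iff).mpr (Or.inr hfin6')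
      have hae : ∀ᵐ y ∂(μH[(n:ℝ)].restrict L), ‖f y - f (ψ y)‖ ≤ g y := by
        rw [ae_restrict_iff' hLmeas]
        apply ae_of_all
        intro y hyL
        rw [Real.norm_eq_abs]
        exact hptwise y hyL
      calc |∫ y in L, (f y - f (ψ y)) ∂μH[(n:ℝ)]|
          = ‖∫ y in L, (f y - f (ψ y)) ∂μH[(n:ℝ)]‖ := (Real.norm_eq_abs _).symm
        _ ≤ ∫ y in L, g y ∂μH[(n:ℝ)] := norm_integral_le_of_norm_le hgint hae
        _ = ((μH[(n:ℝ)].restrict L) (closedBall z (6*R))).toReal • (Λ*((1+14*K)*δ)) := by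
            rw [hgdef]
            exact integral_indicator_const _ measurableSet_closedBall
        _ ≤ Λ*((1+14*K)*δ) * (An * (6*R)^n) := by
            rw [smul_eq_mul, Measure.restrict_apply measurableSet_closedBall, Set.inter_comm]
            have h1 : (μH[(n:ℝ)] (L ∩ closedBall z (6*R))).toReal ≤ An * (6*R)^n :=
              ENNReal.toReal_le_of_le_ofReal (by positivity) (hmeasL (6*R) (by positivity))
            have h2 : (0:ℝ) ≤ Λ*((1+14*K)*δ) := by positivity
            nlinarith [ENNReal.toReal_nonneg (a := μH[(n:ℝ)] (L ∩ closedBall z (6*R)))]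
    refine le_trans hdiff ?_
    have hexp : Λ*((1+14*K)*δ) * (An * (6*R)^n) = ((1+14*K)*An*6^n)*Λ*δ*R^n := by
      rw [mul_pow]
      ring
    rw [hexp]
    have h9 : (0:ℝ) ≤ Λ*δ*R^n := by positivity
    have h10 : (0:ℝ) ≤ 8*An/η := by positivity
    have h11 : (1+14*K)*An*6^n ≤ 8*An/η + (1+14*K)*An*6^n + 1 := by linarith
    calc (1+14*K)*An*6^n*Λ*δ*R^n = ((1+14*K)*An*6^n)*(Λ*δ*R^n) := by ring
      _ ≤ (8*An/η + (1+14*K)*An*6^n + 1)*(Λ*δ*R^n) := mul_le_mul_of_nonneg_right h11 h9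
      _ = (8*An/η + (1+14*K)*An*6^n + 1)*Λ*δ*R^n := by ring
end
end

section
/- Let d ≥ 1 be an integer, β > 0, A ≥ 0, and let μ be a locally finite Borel measure on ℝ^d. Suppose a assigns to each dyadic cube P ⊂ ℝ^d a number a(P) ≥ 0 such that Σ_{P ⊆ R} a(P) μ(P) ≤ A μ(R) for every dyadic cube R. Then for every dyadic cube R, Σ_{Q ⊆ R} μ(Q) Σ_{P : Q ⊆ P ⊆ R} (ℓ(Q)/ℓ(P))^β a(P) ≤ (1 − 2^{−β})^{−1} A μ(R), where Q and P run over dyadic cubes. -/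
open MeasureTheory Metric Set
open scoped ENNReal NNReal

noncomputable section

/-- The dyadic cube of generation `p.1 ∈ ℤ` indexed by `p.2 ∈ ℤ^d`, i.e. the set
`2^{-p.1}(p.2 + [0,1)^d)`. Its side length is `2^{-p.1}`. -/
def dyCube (d : ℕ) (p : ℤ × (Fin d → ℤ)) : Set (Euc d) :=
  {x : Euc d | ∀ i : Fin d,
    (p.2 i : ℝ) * (2 : ℝ) ^ (-p.1) ≤ x i ∧ x i < ((p.2 i : ℝ) + 1) * (2 : ℝ) ^ (-p.1)}

/-- The side length of the dyadic cube indexed by `p`. -/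
def dySide {d : ℕ} (p : ℤ × (Fin d → ℤ)) : ℝ := (2 : ℝ) ^ (-p.1)


section Statement13Aux
open Classical

variable {d : ℕ}

lemma mem_dyCube_iff' {p : ℤ × (Fin d → ℤ)} {x : Euc d} :
    x ∈ dyCube d p ↔ ∀ i : Fin d, ⌊x i * (2:ℝ) ^ p.1⌋ = p.2 i := by
  unfold dyCube
  simp only [Set.mem_setOf_eq]
  refine forall_congr' fun i => ?_
  rw [Int.floor_eq_iff]
  have h2 : (0:ℝ) < (2:ℝ) ^ p.1 := zpow_pos (by norm_num) _
  constructor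
  · rintro ⟨h1, h2'⟩
    constructor
    · calc (p.2 i : ℝ) = (p.2 i : ℝ) * (2:ℝ)^(-p.1) * (2:ℝ)^p.1 := by
            rw [mul_assoc, ← zpow_add₀ (by norm_num : (2:ℝ) ≠ 0)]; simp
      _ ≤ x i * (2:ℝ)^p.1 := by exact mul_le_mul_of_nonneg_right h1 h2.le
    · calc x i * (2:ℝ)^p.1 < ((p.2 i : ℝ)+1) * (2:ℝ)^(-p.1) * (2:ℝ)^p.1 :=
            mul_lt_mul_of_pos_right h2' h2
      _ = (p.2 i : ℝ) + 1 := by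
            rw [mul_assoc, ← zpow_add₀ (by norm_num : (2:ℝ) ≠ 0)]; simp
  · rintro ⟨h1, h2'⟩
    constructor
    · have := mul_le_mul_of_nonneg_right h1 (zpow_pos (by norm_num : (0:ℝ)<2) (-p.1)).le
      rw [mul_assoc, ← zpow_add₀ (by norm_num : (2:ℝ) ≠ 0)] at this
      simpa using this
    · have := mul_lt_mul_of_pos_right h2' (zpow_pos (by norm_num : (0:ℝ)<2) (-p.1))
      rw [mul_assoc, ← zpow_add₀ (by norm_num : (2:ℝ) ≠ 0)] at this
      simpa using this

lemma floor_scale_eq' {j k : ℤ} (hkj : k ≤ j) {x y : ℝ}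
    (h : ⌊x * (2:ℝ)^j⌋ = ⌊y * (2:ℝ)^j⌋) : ⌊x * (2:ℝ)^k⌋ = ⌊y * (2:ℝ)^k⌋ := by
  set m := ⌊x * (2:ℝ)^j⌋ with hm
  set N : ℤ := 2 ^ (j - k).toNat with hN
  have hNr : (N : ℝ) = (2:ℝ) ^ (j - k) := by
    rw [hN]; push_cast
    rw [← zpow_natCast (2:ℝ), Int.toNat_of_nonneg (by omega)]
  have hNpos : (0:ℝ) < N := by rw [hNr]; positivity
  set c : ℤ := ⌊(m : ℝ) / N⌋ with hc
  have key : ∀ t : ℝ, ⌊t * (2:ℝ)^j⌋ = m → ⌊t * (2:ℝ)^k⌋ = c := by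
    intro t ht
    have h1 : (m:ℝ) ≤ t * 2^j := (Int.floor_eq_iff.mp ht).1
    have h2 : t * 2^j < m + 1 := by exact_mod_cast (Int.floor_eq_iff.mp ht).2
    have hsplit : t * (2:ℝ)^j = t * 2^k * N := by
      rw [hNr, mul_assoc, ← zpow_add₀ (by norm_num : (2:ℝ) ≠ 0)]
      ring_nf
    rw [hsplit] at h1 h2
    rw [Int.floor_eq_iff]
    constructor
    · have : (c:ℝ) ≤ (m:ℝ)/N := Int.floor_le _
      have : (m:ℝ)/N ≤ t * 2^k := by
        rw [div_le_iff₀ hNpos]; exact h1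
      linarith [Int.floor_le ((m:ℝ)/N)]
    · have hlt : t * 2^k < ((m:ℝ)+1)/N := by
        rw [lt_div_iff₀ hNpos]; exact h2
      have hint : (m:ℤ) + 1 ≤ (c+1) * N := by
        have : (m:ℝ)/N < c + 1 := Int.lt_floor_add_one _
        have : (m:ℝ) < (c+1) * N := by
          rw [div_lt_iff₀ hNpos] at this; linarith
        exact_mod_cast Int.lt_iff_add_one_le.mp (by exact_mod_cast this)
      have : ((m:ℝ)+1)/N ≤ c + 1 := by
        rw [div_le_iff₀ hNpos]; exact_mod_cast hint
      linarith
  rw [key x hm.symm, key y h.symm]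

lemma dySide_pos (p : ℤ × (Fin d → ℤ)) : 0 < dySide p :=
  zpow_pos (by norm_num) _

lemma base_mem_dyCube (p : ℤ × (Fin d → ℤ)) :
    (WithLp.toLp 2 (fun i => (p.2 i : ℝ) * (2:ℝ)^(-p.1)) : Euc d) ∈ dyCube d p := by
  rw [mem_dyCube_iff']
  intro i
  show ⌊(p.2 i : ℝ) * (2:ℝ)^(-p.1) * (2:ℝ)^p.1⌋ = p.2 i
  rw [mul_assoc, ← zpow_add₀ (by norm_num : (2:ℝ) ≠ 0)]
  simp

lemma gen_le_of_dyCube_subset (hd : 1 ≤ d) {p q : ℤ × (Fin d → ℤ)}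
    (h : dyCube d p ⊆ dyCube d q) : q.1 ≤ p.1 := by
  by_contra hlt
  push_neg at hlt
  set i₀ : Fin d := ⟨0, hd⟩
  set x : Euc d := WithLp.toLp 2 (fun i => (p.2 i : ℝ) * (2:ℝ)^(-p.1)) with hx
  have hxp : x ∈ dyCube d p := base_mem_dyCube p
  set y : Euc d := WithLp.toLp 2 (fun i => if i = i₀ then (p.2 i : ℝ) * (2:ℝ)^(-p.1) + (2:ℝ)^(-q.1) else x i) with hy
  have hyp : y ∈ dyCube d p := by
    rw [mem_dyCube_iff']
    intro i
    by_cases hi : i = i₀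
    · show ⌊y i * (2:ℝ)^p.1⌋ = p.2 i
      have : y i = (p.2 i : ℝ) * (2:ℝ)^(-p.1) + (2:ℝ)^(-q.1) := by rw [hy]; simp [hi]
      rw [this, add_mul, mul_assoc, ← zpow_add₀ (by norm_num : (2:ℝ) ≠ 0),
        ← zpow_add₀ (by norm_num : (2:ℝ) ≠ 0)]
      simp only [neg_add_cancel, zpow_zero, mul_one]
      have h1 : (0:ℝ) < (2:ℝ)^(-q.1 + p.1) := by positivity
      have h2 : (2:ℝ)^(-q.1 + p.1) < 1 := by
        apply zpow_lt_one_of_neg₀ (by norm_num : (1:ℝ) < 2) (by omega)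
      rw [Int.floor_eq_iff]
      constructor
      · linarith
      · push_cast; linarith
    · have : y i = x i := by rw [hy]; simp [hi]
      rw [this]
      exact (mem_dyCube_iff'.mp hxp) i
  have hxq := mem_dyCube_iff'.mp (h hxp) i₀
  have hyq := mem_dyCube_iff'.mp (h hyp) i₀
  have hyv : y i₀ = x i₀ + (2:ℝ)^(-q.1) := by rw [hy, hx]; simp
  rw [hyv, add_mul, ← zpow_add₀ (by norm_num : (2:ℝ) ≠ 0)] at hyq
  simp only [neg_add_cancel, zpow_zero] at hyq
  rw [show x i₀ * (2:ℝ)^q.1 + 1 = x i₀ * (2:ℝ)^q.1 + (1:ℤ) by push_cast; ring,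
    Int.floor_add_intCast] at hyq
  omega

lemma dyCube_disjoint' {j : ℤ} {z w : Fin d → ℤ} (h : z ≠ w) :
    dyCube d (j, z) ∩ dyCube d (j, w) = ∅ := by
  ext x
  simp only [Set.mem_inter_iff, Set.mem_empty_iff_false, iff_false, not_and]
  intro hz hw
  apply h
  funext i
  exact (mem_dyCube_iff'.mp hz i).symm.trans (mem_dyCube_iff'.mp hw i)

lemma measurable_dyCube (p : ℤ × (Fin d → ℤ)) : MeasurableSet (dyCube d p) := by
  have : dyCube d p = ⋂ i : Fin d,
      (fun x : Euc d => x i) ⁻¹' (Set.Ico ((p.2 i : ℝ) * (2:ℝ)^(-p.1))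
        (((p.2 i : ℝ)+1) * (2:ℝ)^(-p.1))) := by
    ext x; simp [dyCube, Set.mem_Ico]
  rw [this]
  refine MeasurableSet.iInter fun i => ?_
  have hm : Measurable (fun x : Euc d => x i) :=
    (measurable_pi_apply i).comp (WithLp.measurable_ofLp (p := 2) (X := Fin d → ℝ))
  exact hm measurableSet_Ico

lemma sum_gen_le (μ : Measure (Euc d)) (j : ℤ) (p : ℤ × (Fin d → ℤ)) :
    ∑' w : Fin d → ℤ, (if dyCube d (j, w) ⊆ dyCube d p then μ (dyCube d (j, w)) else 0)
      ≤ μ (dyCube d p) := by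
  set t : (Fin d → ℤ) → Set (Euc d) :=
    fun w => if dyCube d (j, w) ⊆ dyCube d p then dyCube d (j, w) else ∅ with ht
  have h1 : ∀ w, (if dyCube d (j, w) ⊆ dyCube d p then μ (dyCube d (j, w)) else 0) = μ (t w) := by
    intro w; rw [ht]; dsimp only; split <;> simp
  simp_rw [h1]
  rw [← measure_iUnion]
  · apply measure_mono
    refine Set.iUnion_subset fun w => ?_
    rw [ht]; dsimp only; split
    · assumption
    · exact Set.empty_subset _
  · intro w w' hww
    have hsub : ∀ u, t u ⊆ dyCube d (j, u) := by
      intro u; rw [ht]; dsimp only; split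
      · exact subset_rfl
      · exact Set.empty_subset _
    apply Set.disjoint_of_subset (hsub w) (hsub w')
    rw [Set.disjoint_iff_inter_eq_empty]
    exact dyCube_disjoint' hww
  · intro w; rw [ht]; dsimp only; split
    · exact measurable_dyCube _
    · exact MeasurableSet.empty

lemma ratio_pow (β : ℝ) (k : ℤ) (n : ℕ) :
    ENNReal.ofReal (((2:ℝ)^(-(k + n : ℤ)) / (2:ℝ)^(-k)) ^ β)
      = (ENNReal.ofReal ((2:ℝ)^(-β)))^n := by
  have h0 : ((2:ℝ)^(-(k + n : ℤ)) / (2:ℝ)^(-k)) = (2:ℝ)^(-(n:ℤ)) := by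
    rw [← zpow_sub₀ (by norm_num : (2:ℝ) ≠ 0)]
    congr 1; ring
  rw [h0]
  have h1 : ((2:ℝ)^(-(n:ℤ)) : ℝ) ^ β = ((2:ℝ)^(-β))^n := by
    rw [← Real.rpow_intCast (2:ℝ) (-(n:ℤ)), ← Real.rpow_natCast ((2:ℝ)^(-β)) n,
      ← Real.rpow_mul (by norm_num : (0:ℝ) ≤ 2), ← Real.rpow_mul (by norm_num : (0:ℝ) ≤ 2)]
    push_cast; ring_nf
  rw [h1, ENNReal.ofReal_pow (Real.rpow_nonneg (by norm_num) _)]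

lemma geom_int (k : ℤ) (r : ℝ≥0∞) :
    ∑' j : ℤ, (if k ≤ j then r ^ (j - k).toNat else 0) = (1 - r)⁻¹ := by
  rw [← ENNReal.tsum_geometric r]
  symm
  have hinj : Function.Injective (fun n : ℕ => k + (n:ℤ)) := by
    intro m n h; simpa using h
  have := hinj.tsum_eq (f := fun j : ℤ => if k ≤ j then r ^ (j - k).toNat else 0) ?_
  · rw [← this]
    congr 1; funext n
    simp only [le_add_iff_nonneg_right, Int.natCast_nonneg, if_true, add_sub_cancel_left,
      Int.toNat_natCast]
  · intro j hj
    simp only [Function.mem_support, ne_eq] at hj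
    by_cases hk : k ≤ j
    · exact ⟨(j - k).toNat, by simp; omega⟩
    · exact absurd (if_neg hk) hj

lemma inner_bound (hd : 1 ≤ d) (β : ℝ) (hβ : 0 < β) (μ : Measure (Euc d))
    (p : ℤ × (Fin d → ℤ)) :
    ∑' q : ℤ × (Fin d → ℤ),
        (if dyCube d q ⊆ dyCube d p then
          ENNReal.ofReal ((dySide q / dySide p) ^ β) * μ (dyCube d q) else 0)
      ≤ ENNReal.ofReal ((1 - (2:ℝ)^(-β))⁻¹) * μ (dyCube d p) := by
  set r : ℝ≥0∞ := ENNReal.ofReal ((2:ℝ)^(-β)) with hr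
  have h2β : (0:ℝ) < (2:ℝ)^(-β) := Real.rpow_pos_of_pos (by norm_num) _
  have h2β1 : (2:ℝ)^(-β) < 1 :=
    Real.rpow_lt_one_of_one_lt_of_neg (by norm_num) (by linarith)
  calc ∑' q : ℤ × (Fin d → ℤ), (if dyCube d q ⊆ dyCube d p then
          ENNReal.ofReal ((dySide q / dySide p) ^ β) * μ (dyCube d q) else 0)
      = ∑' j : ℤ, ∑' w : Fin d → ℤ, (if dyCube d (j, w) ⊆ dyCube d p then
          ENNReal.ofReal ((dySide ((j, w) : ℤ × (Fin d → ℤ)) / dySide p) ^ β)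
            * μ (dyCube d (j, w)) else 0) := ENNReal.tsum_prod'
    _ ≤ ∑' j : ℤ, (if p.1 ≤ j then r ^ (j - p.1).toNat else 0) * μ (dyCube d p) := by
        apply ENNReal.tsum_le_tsum
        intro j
        by_cases hj : p.1 ≤ j
        · rw [if_pos hj]
          set n : ℕ := (j - p.1).toNat with hn
          have hratio : ENNReal.ofReal
              ((dySide ((j, (0 : Fin d → ℤ)) : ℤ × (Fin d → ℤ)) / dySide p) ^ β) = r ^ n := by
            have hds : dySide ((j, (0 : Fin d → ℤ)) : ℤ × (Fin d → ℤ))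
                = (2:ℝ) ^ (-(p.1 + (n : ℤ))) := by
              unfold dySide; congr 1; omega
            rw [hds]
            exact ratio_pow β p.1 n
          have heq : ∀ w : Fin d → ℤ, (if dyCube d (j, w) ⊆ dyCube d p then
              ENNReal.ofReal ((dySide ((j, w) : ℤ × (Fin d → ℤ)) / dySide p) ^ β)
                * μ (dyCube d (j, w)) else 0)
              = r ^ n * (if dyCube d (j, w) ⊆ dyCube d p then μ (dyCube d (j, w)) else 0) := by
            intro w
            split
            · rw [show dySide ((j, w) : ℤ × (Fin d → ℤ))
                  = dySide ((j, (0 : Fin d → ℤ)) : ℤ × (Fin d → ℤ)) from rfl, hratio]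
            · rw [mul_zero]
          simp_rw [heq]
          rw [ENNReal.tsum_mul_left]
          exact mul_le_mul_right (sum_gen_le μ j p) _
        · rw [if_neg hj, zero_mul]
          have : ∀ w : Fin d → ℤ, (if dyCube d (j, w) ⊆ dyCube d p then
              ENNReal.ofReal ((dySide ((j, w) : ℤ × (Fin d → ℤ)) / dySide p) ^ β)
                * μ (dyCube d (j, w)) else 0) = 0 := by
            intro w
            rw [if_neg]
            intro hsub
            exact hj (gen_le_of_dyCube_subset hd hsub)
          simp_rw [this]
          simp
    _ = (∑' j : ℤ, (if p.1 ≤ j then r ^ (j - p.1).toNat else 0)) * μ (dyCube d p) :=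
        ENNReal.tsum_mul_right
    _ = (1 - r)⁻¹ * μ (dyCube d p) := by rw [geom_int]
    _ = ENNReal.ofReal ((1 - (2:ℝ)^(-β))⁻¹) * μ (dyCube d p) := by
        rw [ENNReal.ofReal_inv_of_pos (by linarith), ENNReal.ofReal_sub _ h2β.le,
          ENNReal.ofReal_one, hr]

end Statement13Aux

/-- if the nonnegative coefficients `a(P)` satisfy the Carleson packing
condition `Σ_{P ⊆ R} a(P) μ(P) ≤ A μ(R)`, then
`Σ_{Q ⊆ R} μ(Q) Σ_{Q ⊆ P ⊆ R} (ℓ(Q)/ℓ(P))^β a(P) ≤ (1 - 2^{-β})⁻¹ A μ(R)`. -/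
theorem statement13 (d : ℕ) (hd : 1 ≤ d) (β A : ℝ) (hβ : 0 < β) (hA : 0 ≤ A)
    (μ : Measure (Euc d)) [IsLocallyFiniteMeasure μ]
    (a : ℤ × (Fin d → ℤ) → ℝ) (ha : ∀ p, 0 ≤ a p)
    (hCar : ∀ R : ℤ × (Fin d → ℤ),
      ∑' P : {p : ℤ × (Fin d → ℤ) // dyCube d p ⊆ dyCube d R},
          ENNReal.ofReal (a P.1) * μ (dyCube d P.1)
        ≤ ENNReal.ofReal A * μ (dyCube d R)) :
    ∀ R : ℤ × (Fin d → ℤ),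
      ∑' Q : {p : ℤ × (Fin d → ℤ) // dyCube d p ⊆ dyCube d R},
          μ (dyCube d Q.1) *
            ∑' P : {p : ℤ × (Fin d → ℤ) //
                dyCube d Q.1 ⊆ dyCube d p ∧ dyCube d p ⊆ dyCube d R},
              ENNReal.ofReal ((dySide Q.1 / dySide P.1) ^ β * a P.1)
        ≤ ENNReal.ofReal ((1 - (2 : ℝ) ^ (-β))⁻¹ * A) * μ (dyCube d R) := by
  intro R
  classical
  have h2β : (0:ℝ) < (2:ℝ)^(-β) := Real.rpow_pos_of_pos (by norm_num) _
  have h2β1 : (2:ℝ)^(-β) < 1 :=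
    Real.rpow_lt_one_of_one_lt_of_neg (by norm_num) (by linarith)
  set K : ℝ≥0∞ := ENNReal.ofReal ((1 - (2:ℝ)^(-β))⁻¹) with hK
  set F : (ℤ × (Fin d → ℤ)) → (ℤ × (Fin d → ℤ)) → ℝ≥0∞ := fun q p =>
    if dyCube d q ⊆ dyCube d p ∧ dyCube d p ⊆ dyCube d R then
      ENNReal.ofReal ((dySide q / dySide p) ^ β) * μ (dyCube d q) * ENNReal.ofReal (a p)
    else 0 with hF
  have step1 : ∑' Q : {p : ℤ × (Fin d → ℤ) // dyCube d p ⊆ dyCube d R},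
      μ (dyCube d Q.1) *
        ∑' P : {p : ℤ × (Fin d → ℤ) //
            dyCube d Q.1 ⊆ dyCube d p ∧ dyCube d p ⊆ dyCube d R},
          ENNReal.ofReal ((dySide Q.1 / dySide P.1) ^ β * a P.1)
      = ∑' q, ∑' p, F q p := by
    have hinner : ∀ q : ℤ × (Fin d → ℤ), dyCube d q ⊆ dyCube d R →
        μ (dyCube d q) *
          ∑' P : {p : ℤ × (Fin d → ℤ) //
              dyCube d q ⊆ dyCube d p ∧ dyCube d p ⊆ dyCube d R},
            ENNReal.ofReal ((dySide q / dySide P.1) ^ β * a P.1)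
        = ∑' p, F q p := by
      intro q _
      have h1 : (∑' P : {p : ℤ × (Fin d → ℤ) //
            dyCube d q ⊆ dyCube d p ∧ dyCube d p ⊆ dyCube d R},
          ENNReal.ofReal ((dySide q / dySide P.1) ^ β * a P.1))
          = ∑' p, Set.indicator
              {p : ℤ × (Fin d → ℤ) | dyCube d q ⊆ dyCube d p ∧ dyCube d p ⊆ dyCube d R}
              (fun p => ENNReal.ofReal ((dySide q / dySide p) ^ β * a p)) p :=
        tsum_subtype
          {p : ℤ × (Fin d → ℤ) | dyCube d q ⊆ dyCube d p ∧ dyCube d p ⊆ dyCube d R}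
          (fun p => ENNReal.ofReal ((dySide q / dySide p) ^ β * a p))
      rw [h1, ← ENNReal.tsum_mul_left]
      congr 1; funext p
      rw [Set.indicator_apply, hF]
      simp only [Set.mem_setOf_eq]
      by_cases hc : dyCube d q ⊆ dyCube d p ∧ dyCube d p ⊆ dyCube d R
      · rw [if_pos hc, if_pos hc, ENNReal.ofReal_mul
          (Real.rpow_nonneg (div_nonneg (dySide_pos q).le (dySide_pos p).le) _)]
        ring
      · rw [if_neg hc, if_neg hc, mul_zero]
    calc ∑' Q : {p : ℤ × (Fin d → ℤ) // dyCube d p ⊆ dyCube d R},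
        μ (dyCube d Q.1) *
          ∑' P : {p : ℤ × (Fin d → ℤ) //
              dyCube d Q.1 ⊆ dyCube d p ∧ dyCube d p ⊆ dyCube d R},
            ENNReal.ofReal ((dySide Q.1 / dySide P.1) ^ β * a P.1)
        = ∑' Q : {p : ℤ × (Fin d → ℤ) // dyCube d p ⊆ dyCube d R}, ∑' p, F Q.1 p := by
          congr 1; funext Q
          exact hinner Q.1 Q.2
      _ = ∑' q, Set.indicator {q : ℤ × (Fin d → ℤ) | dyCube d q ⊆ dyCube d R}
            (fun q => ∑' p, F q p) q := tsum_subtype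
              {q : ℤ × (Fin d → ℤ) | dyCube d q ⊆ dyCube d R} (fun q => ∑' p, F q p)
      _ = ∑' q, ∑' p, F q p := by
          congr 1; funext q
          rw [Set.indicator_apply]
          split
          · rfl
          · symm
            rw [ENNReal.tsum_eq_zero]
            intro p
            rw [hF]
            dsimp only
            rw [if_neg]
            rintro ⟨h1, h2⟩
            exact ‹q ∉ _› (h1.trans h2)
  rw [step1, ENNReal.tsum_comm]
  have step3 : ∀ p : ℤ × (Fin d → ℤ), ∑' q, F q p ≤
      (if dyCube d p ⊆ dyCube d R then K * (ENNReal.ofReal (a p) * μ (dyCube d p)) else 0) := by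
    intro p
    by_cases hp : dyCube d p ⊆ dyCube d R
    · rw [if_pos hp]
      have hFq : ∀ q, F q p = (if dyCube d q ⊆ dyCube d p then
          ENNReal.ofReal ((dySide q / dySide p) ^ β) * μ (dyCube d q) else 0)
            * ENNReal.ofReal (a p) := by
        intro q
        rw [hF]
        dsimp only
        by_cases hq : dyCube d q ⊆ dyCube d p
        · rw [if_pos ⟨hq, hp⟩, if_pos hq]
        · rw [if_neg (fun h => hq h.1), if_neg hq, zero_mul]
      simp_rw [hFq]
      rw [ENNReal.tsum_mul_right]
      calc (∑' q, (if dyCube d q ⊆ dyCube d p then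
            ENNReal.ofReal ((dySide q / dySide p) ^ β) * μ (dyCube d q) else 0))
              * ENNReal.ofReal (a p)
          ≤ (K * μ (dyCube d p)) * ENNReal.ofReal (a p) :=
            mul_le_mul_left (inner_bound hd β hβ μ p) _
        _ = K * (ENNReal.ofReal (a p) * μ (dyCube d p)) := by ring
    · rw [if_neg hp]
      refine le_of_eq ?_
      rw [ENNReal.tsum_eq_zero]
      intro q
      rw [hF]
      dsimp only
      rw [if_neg (fun h => hp h.2)]
  calc ∑' p, ∑' q, F q p
      ≤ ∑' p, (if dyCube d p ⊆ dyCube d R then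
          K * (ENNReal.ofReal (a p) * μ (dyCube d p)) else 0) :=
        ENNReal.tsum_le_tsum step3
    _ = K * ∑' p, (if dyCube d p ⊆ dyCube d R then
          ENNReal.ofReal (a p) * μ (dyCube d p) else 0) := by
        rw [← ENNReal.tsum_mul_left]
        congr 1; funext p
        split
        · rfl
        · rw [mul_zero]
    _ = K * ∑' P : {p : ℤ × (Fin d → ℤ) // dyCube d p ⊆ dyCube d R},
          ENNReal.ofReal (a P.1) * μ (dyCube d P.1) := by
        congr 1
        have h2 : (∑' P : {p : ℤ × (Fin d → ℤ) // dyCube d p ⊆ dyCube d R},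
            ENNReal.ofReal (a P.1) * μ (dyCube d P.1))
            = ∑' p, Set.indicator {p : ℤ × (Fin d → ℤ) | dyCube d p ⊆ dyCube d R}
                (fun p => ENNReal.ofReal (a p) * μ (dyCube d p)) p :=
          tsum_subtype {p : ℤ × (Fin d → ℤ) | dyCube d p ⊆ dyCube d R}
            (fun p => ENNReal.ofReal (a p) * μ (dyCube d p))
        rw [h2]
        congr 1
    _ ≤ K * (ENNReal.ofReal A * μ (dyCube d R)) := mul_le_mul_right (hCar R) _
    _ = ENNReal.ofReal ((1 - (2:ℝ)^(-β))⁻¹ * A) * μ (dyCube d R) := by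
        rw [ENNReal.ofReal_mul (inv_nonneg.mpr (by linarith : (0:ℝ) ≤ 1 - (2:ℝ)^(-β))), hK, mul_assoc]
end
end
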